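/- arXiv:1707.09765 — 3 statements merged into one kernel-verified Lean document; each statement's English description precedes it below -/
import Mathlib

section
/- Let H be a real Hilbert space, a < b reals, and f : [a,b] → H of bounded pointwise variation with f right continuous at every point. Define ℓ_f(t) := a + (b−a)·pV(f,[a,t])/pV(f,[a,b]) when pV(f,[a,b]) ≠ 0 (and ℓ_f ≡ a otherwise). Then there exists a unique Lipschitz function f̃ : [a,b] → H with Lipschitz constant at most pV(f,[a,b])/(b−a) such that f = f̃ ∘ ℓ_f and f̃(ℓ_f(t−)(1−λ) + ℓ_f(t)λ) = (1−λ)f(t−) + λf(t) for every t ∈ [a,b] and λ ∈ [0,1]. -/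
open Set Filter Topology
open scoped ENNReal NNReal

/-- The normalized arc-length reparametrization `ℓ_f` of a function of bounded variation
on `[a,b]`. -/
noncomputable def arcLength (a b : ℝ) {H : Type*} [NormedAddCommGroup H]
    (f : ℝ → H) (t : ℝ) : ℝ :=
  if eVariationOn f (Set.Icc a b) = 0 then a
  else a + (b - a) * (eVariationOn f (Set.Icc a t)).toReal /
    (eVariationOn f (Set.Icc a b)).toReal

section Aux
variable {H : Type*} [NormedAddCommGroup H] {a b t : ℝ} {f : ℝ → H}

noncomputable def auxV (a : ℝ) (f : ℝ → H) (t : ℝ) : ℝ := (eVariationOn f (Set.Icc a t)).toReal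


lemma auxV_of_le {t : ℝ} (h : t ≤ a) : auxV a f t = 0 := by
  unfold auxV
  rw [eVariationOn.subsingleton, ENNReal.toReal_zero]
  intro x hx y hy
  have : x = y := le_antisymm (hx.2.trans (h.trans hy.1)) (hy.2.trans (h.trans hx.1))
  simp [this]

lemma aux_fin (hBV : eVariationOn f (Icc a b) ≠ ⊤) {x : ℝ} (hx : x ≤ b) :
    eVariationOn f (Icc a x) ≠ ⊤ :=
  fun h => hBV (top_le_iff.1 (h ▸ eVariationOn.mono f (Icc_subset_Icc le_rfl hx)))

lemma auxV_mono (hBV : eVariationOn f (Icc a b) ≠ ⊤) {x y : ℝ} (hxy : x ≤ y) (hy : y ≤ b) :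
    auxV a f x ≤ auxV a f y :=
  ENNReal.toReal_mono (aux_fin hBV hy) (eVariationOn.mono f (Icc_subset_Icc le_rfl hxy))

lemma aux_evar_add {x y : ℝ} (hax : a ≤ x) (hxy : x ≤ y) :
    eVariationOn f (Icc a x) + eVariationOn f (Icc x y) = eVariationOn f (Icc a y) := by
  have := eVariationOn.Icc_add_Icc f (s := Icc a y) hax hxy ⟨hax, hxy⟩
  rwa [inter_eq_self_of_subset_right (Icc_subset_Icc le_rfl hxy),
    inter_eq_self_of_subset_right (Icc_subset_Icc hax le_rfl), inter_self] at this

lemma auxV_sub (hBV : eVariationOn f (Icc a b) ≠ ⊤) {x y : ℝ} (hax : a ≤ x) (hxy : x ≤ y)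
    (hy : y ≤ b) : (eVariationOn f (Icc x y)).toReal = auxV a f y - auxV a f x := by
  have h := aux_evar_add (f := f) hax hxy
  have h1 : eVariationOn f (Icc a x) ≠ ⊤ := aux_fin hBV (hxy.trans hy)
  have h2 : eVariationOn f (Icc x y) ≠ ⊤ := fun ht => aux_fin hBV hy (by rw [← h, ht, add_top])
  rw [auxV, auxV, ← h, ENNReal.toReal_add h1 h2]
  ring

lemma aux_dist_le (hBV : eVariationOn f (Icc a b) ≠ ⊤) {x y : ℝ} (hax : a ≤ x) (hxy : x ≤ y)
    (hy : y ≤ b) : dist (f x) (f y) ≤ auxV a f y - auxV a f x := by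
  rw [← auxV_sub hBV hax hxy hy, dist_edist]
  have h2 : eVariationOn f (Icc x y) ≠ ⊤ := by
    intro ht
    exact aux_fin hBV hy (by rw [← aux_evar_add hax hxy, ht, add_top])
  exact ENNReal.toReal_mono h2 (eVariationOn.edist_le f ⟨le_rfl, hxy⟩ ⟨hxy, le_rfl⟩)

lemma aux_leftLim [CompleteSpace H] (hBV : eVariationOn f (Icc a b) ≠ ⊤)
    (hat : a < t) (htb : t ≤ b) :
    ∃ fl : H, Tendsto f (𝓝[<] t) (𝓝 fl) := by
  set V := auxV a f with hV
  have hbdd : BddAbove (V '' Iio t) := by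
    refine ⟨V b, ?_⟩
    rintro y ⟨x, hx, rfl⟩
    exact auxV_mono hBV ((le_of_lt hx).trans htb) le_rfl
  set Vl := sSup (V '' Iio t) with hVl
  have hcauchy : Cauchy (map f (𝓝[<] t)) := by
    refine Metric.cauchy_iff.2 ⟨map_neBot, fun ε hε => ?_⟩
    obtain ⟨y, ⟨u0, hu0t, rfl⟩, hu0⟩ :=
      exists_lt_of_lt_csSup (Nonempty.image _ (nonempty_Iio (a := t))) (sub_lt_self Vl hε)
    set u1 := max u0 a with hu1
    have hu1t : u1 < t := max_lt hu0t hat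
    have hVu1 : Vl - ε < V u1 :=
      lt_of_lt_of_le hu0 (auxV_mono hBV (le_max_left _ _) (hu1t.le.trans htb))
    refine ⟨f '' Ioo u1 t, image_mem_map (Ioo_mem_nhdsLT_of_mem ⟨hu1t, le_rfl⟩), ?_⟩
    rintro _ ⟨x, hx, rfl⟩ _ ⟨y, hy, rfl⟩
    have key : ∀ p q : ℝ, p ∈ Ioo u1 t → q ∈ Ioo u1 t → p ≤ q →
        dist (f p) (f q) < ε := by
      intro p q hp hq hpq
      have h1 : dist (f p) (f q) ≤ V q - V p :=
        aux_dist_le hBV ((le_max_right u0 a).trans hp.1.le) hpq (hq.2.le.trans htb)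
      have h2 : V q ≤ Vl := le_csSup hbdd ⟨q, hq.2, rfl⟩
      have h3 : V u1 ≤ V p := auxV_mono hBV hp.1.le (hp.2.le.trans htb)
      linarith
    rcases le_total x y with h | h
    · exact key x y hx hy h
    · rw [dist_comm]; exact key y x hy hx h
  obtain ⟨fl, hfl⟩ := CompleteSpace.complete hcauchy
  exact ⟨fl, hfl⟩

lemma aux_varRC (hBV : eVariationOn f (Icc a b) ≠ ⊤)
    (hrc : ContinuousWithinAt f (Ici t) t) (hat : a ≤ t) (htb : t < b)
    {ε : ℝ} (hε : 0 < ε) :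
    ∃ x, t < x ∧ x ≤ b ∧ (eVariationOn f (Icc t x)).toReal ≤ 2 * ε := by
  classical
  obtain ⟨δ, hδ, hdist⟩ := Metric.continuousWithinAt_iff.1 hrc ε hε
  set u := min (t + δ / 2) b with hu
  have htu : t < u := lt_min (by linarith) htb
  have hub : u ≤ b := min_le_right _ _
  have hdst : ∀ x ∈ Icc t u, dist (f x) (f t) < ε := by
    intro x hx
    refine hdist hx.1 ?_
    rw [Real.dist_eq, abs_of_nonneg (by linarith [hx.1])]
    have : x ≤ t + δ / 2 := hx.2.trans (min_le_left _ _)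
    linarith
  set S := eVariationOn f (Icc t u) with hS
  have hSle : S ≤ eVariationOn f (Icc a b) :=
    eVariationOn.mono f (Icc_subset_Icc hat hub)
  have hSfin : S ≠ ⊤ := fun h => hBV (top_le_iff.1 (h ▸ hSle))
  by_cases hS2 : S ≤ ENNReal.ofReal (2 * ε)
  · refine ⟨u, htu, hub, ?_⟩
    calc S.toReal ≤ (ENNReal.ofReal (2 * ε)).toReal := ENNReal.toReal_mono ENNReal.ofReal_ne_top hS2
      _ = 2 * ε := ENNReal.toReal_ofReal (by linarith)
  · push_neg at hS2
    have hSpos : ENNReal.ofReal ε < S :=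
      lt_of_le_of_lt (ENNReal.ofReal_le_ofReal (by linarith)) hS2
    have h1 : S - ENNReal.ofReal ε < S :=
      ENNReal.sub_lt_self hSfin (lt_of_le_of_lt zero_le hS2).ne' (ENNReal.ofReal_pos.2 hε).ne'
    rw [hS, eVariationOn] at h1
    obtain ⟨⟨n, ⟨v, hv, hvmem⟩⟩, hp⟩ := lt_iSup_iff.1 h1
    simp only at hp
    have hpos : (0 : ℝ≥0∞) < S - ENNReal.ofReal ε := by
      rw [tsub_pos_iff_lt]; exact hSpos
    -- there must be a point of the partition above t
    have hex : ∃ i, t < v i := by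
      by_contra hc
      push_neg at hc
      have hvt : ∀ i, v i = t := fun i => le_antisymm (hc i) (hvmem i).1
      have : (∑ i ∈ Finset.range n, edist (f (v (i + 1))) (f (v i))) = 0 :=
        Finset.sum_eq_zero fun i _ => by rw [hvt, hvt, edist_self]
      rw [this] at hp
      exact (not_lt.2 zero_le) hp
    set k := Nat.find hex with hk
    have hkt : t < v k := Nat.find_spec hex
    have hklt : ∀ i < k, v i = t := fun i hi =>
      le_antisymm (not_lt.1 (Nat.find_min hex hi)) (hvmem i).1
    have hkn : k ≤ n := by
      by_contra hc
      push_neg at hc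
      have : (∑ i ∈ Finset.range n, edist (f (v (i + 1))) (f (v i))) = 0 :=
        Finset.sum_eq_zero fun i hi => by
          rw [hklt i (lt_trans (Finset.mem_range.1 hi) hc),
            hklt (i + 1) (lt_of_le_of_lt (Finset.mem_range.1 hi) hc), edist_self]
      rw [this] at hp
      exact (not_lt.2 zero_le) hp
    -- bound the partition sum
    have hsplit : (∑ i ∈ Finset.range n, edist (f (v (i + 1))) (f (v i))) =
        (∑ i ∈ Finset.Ico 0 k, edist (f (v (i + 1))) (f (v i))) +
        ∑ i ∈ Finset.Ico k n, edist (f (v (i + 1))) (f (v i)) := by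
      rw [Finset.range_eq_Ico, ← Finset.sum_Ico_consecutive _ (Nat.zero_le k) hkn]
    have hb2 : (∑ i ∈ Finset.Ico k n, edist (f (v (i + 1))) (f (v i))) ≤
        eVariationOn f (Icc (v k) u) := by
      apply eVariationOn.sum_le_of_monotoneOn_Icc (f := f) (hv.monotoneOn _)
      exact fun i hi => ⟨hv hi.1, (hvmem i).2⟩
    have hb1 : (∑ i ∈ Finset.Ico 0 k, edist (f (v (i + 1))) (f (v i))) ≤
        ENNReal.ofReal ε := by
      rcases Nat.eq_zero_or_pos k with h0 | h0
      · simp [h0]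
      · have hk1 : k - 1 + 1 = k := Nat.succ_pred_eq_of_pos h0
        rw [← hk1, Finset.sum_Ico_succ_top (Nat.zero_le _)]
        have hzero : (∑ i ∈ Finset.Ico 0 (k - 1), edist (f (v (i + 1))) (f (v i))) = 0 :=
          Finset.sum_eq_zero fun i hi => by
            have him : i < k - 1 := (Finset.mem_Ico.1 hi).2
            rw [hklt i (by omega), hklt (i + 1) (by omega), edist_self]
        rw [hzero, zero_add, hklt (k - 1) (by omega), hk1, edist_dist]
        exact ENNReal.ofReal_le_ofReal (hdst _ ⟨hkt.le, (hvmem _).2⟩).le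
    have hsum : S - ENNReal.ofReal ε ≤ ENNReal.ofReal ε + eVariationOn f (Icc (v k) u) :=
      le_of_lt (lt_of_lt_of_le hp (by rw [hsplit]; exact add_le_add hb1 hb2))
    have hSle2 : S ≤ ENNReal.ofReal (2 * ε) + eVariationOn f (Icc (v k) u) := by
      rw [tsub_le_iff_right] at hsum
      calc S ≤ ENNReal.ofReal ε + eVariationOn f (Icc (v k) u) + ENNReal.ofReal ε := hsum
        _ = ENNReal.ofReal (2 * ε) + eVariationOn f (Icc (v k) u) := by
          rw [two_mul, ENNReal.ofReal_add hε.le hε.le]; ring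
    have hadd : eVariationOn f (Icc t (v k)) + eVariationOn f (Icc (v k) u) = S :=
      aux_evar_add (a := t) hkt.le (hvmem k).2
    have hE2fin : eVariationOn f (Icc (v k) u) ≠ ⊤ := by
      intro h
      apply hSfin
      rw [← hadd, h, add_top]
    have hfinal : eVariationOn f (Icc t (v k)) ≤ ENNReal.ofReal (2 * ε) := by
      rw [← ENNReal.add_le_add_iff_right hE2fin, hadd]
      exact hSle2
    refine ⟨v k, hkt, (hvmem k).2.trans hub, ?_⟩
    calc (eVariationOn f (Icc t (v k))).toReal
        ≤ (ENNReal.ofReal (2 * ε)).toReal := ENNReal.toReal_mono ENNReal.ofReal_ne_top hfinal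
      _ = 2 * ε := ENNReal.toReal_ofReal (by linarith)


end Aux

set_option maxHeartbeats 3000000 in
/-- if `f : [a,b] → H` is right continuous of bounded variation, there is a
unique (on `[a,b]`) Lipschitz function `f̃` with constant at most `pV(f,[a,b])/(b-a)` such
that `f = f̃ ∘ ℓ_f` on `[a,b]` and `f̃` interpolates linearly the jumps of `f`:
`f̃(ℓ_f(t−)(1−λ) + ℓ_f(t)λ) = (1−λ) f(t−) + λ f(t)` (with the convention `f(a−) = f(a)`,
`ℓ_f(a−) = ℓ_f(a)`). -/
theorem stmt7 {H : Type*} [NormedAddCommGroup H] [InnerProductSpace ℝ H] [CompleteSpace H]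
    (a b : ℝ) (hab : a < b) (f : ℝ → H)
    (hBV : eVariationOn f (Icc a b) ≠ ⊤)
    (hrc : ∀ t ∈ Ico a b, ContinuousWithinAt f (Ici t) t) :
    ∃ ft : ℝ → H,
      (LipschitzOnWith ((eVariationOn f (Icc a b)).toReal / (b - a)).toNNReal ft (Icc a b) ∧
        (∀ t ∈ Icc a b, f t = ft (arcLength a b f t)) ∧
        (∀ t ∈ Icc a b, ∃ fl : H, ∃ ll : ℝ,
          (if t = a then fl = f a ∧ ll = arcLength a b f a
            else Tendsto f (𝓝[Iio t] t) (𝓝 fl) ∧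
              Tendsto (arcLength a b f) (𝓝[Iio t] t) (𝓝 ll)) ∧
          ∀ lam ∈ Icc (0:ℝ) 1,
            ft (ll * (1 - lam) + arcLength a b f t * lam) = (1 - lam) • fl + lam • f t)) ∧
      ∀ g : ℝ → H,
        (LipschitzOnWith ((eVariationOn f (Icc a b)).toReal / (b - a)).toNNReal g (Icc a b) ∧
          (∀ t ∈ Icc a b, f t = g (arcLength a b f t)) ∧
          (∀ t ∈ Icc a b, ∃ fl : H, ∃ ll : ℝ,
            (if t = a then fl = f a ∧ ll = arcLength a b f a
              else Tendsto f (𝓝[Iio t] t) (𝓝 fl) ∧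
                Tendsto (arcLength a b f) (𝓝[Iio t] t) (𝓝 ll)) ∧
            ∀ lam ∈ Icc (0:ℝ) 1,
              g (ll * (1 - lam) + arcLength a b f t * lam) = (1 - lam) • fl + lam • f t)) →
        EqOn ft g (Icc a b) := by
  classical
  by_cases hV0 : eVariationOn f (Icc a b) = 0
  · -- degenerate case : f is constant on [a,b]
    have hconst : ∀ t ∈ Icc a b, f t = f a := by
      intro t ht
      have h := eVariationOn.edist_le f (show a ∈ Icc a b from ⟨le_rfl, hab.le⟩) ht
      rw [hV0] at h
      exact (edist_eq_zero.1 (le_antisymm h zero_le)).symm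
    have harc : ∀ t, arcLength a b f t = a := fun t => by simp [arcLength, hV0]
    refine ⟨fun _ => f a, ⟨?_, ?_, ?_⟩, ?_⟩
    · intro x _ y _
      simp
    · exact fun t ht => by rw [hconst t ht]
    · intro t ht
      refine ⟨f a, a, ?_, ?_⟩
      · split_ifs with hta
        · exact ⟨rfl, (harc a).symm⟩
        · constructor
          · have hta' : a < t := lt_of_le_of_ne ht.1 (Ne.symm hta)
            refine Tendsto.congr' ?_
              (tendsto_const_nhds : Tendsto (fun _ : ℝ => f a) (𝓝[<] t) (𝓝 (f a)))
            filter_upwards [Ioo_mem_nhdsLT_of_mem (⟨hta', le_rfl⟩ : t ∈ Ioc a t)] with x hx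
            exact (hconst x ⟨hx.1.le, hx.2.le.trans ht.2⟩).symm
          · have : arcLength a b f = fun _ => a := funext harc
            rw [this]
            exact tendsto_const_nhds
      · intro lam _
        rw [hconst t ht]
        exact (Convex.combo_self (by ring) (f a)).symm
    · rintro g ⟨hg1, hg2, -⟩ s hs
      have hK : ((eVariationOn f (Icc a b)).toReal / (b - a)).toNNReal = 0 := by
        rw [hV0]; simp
      rw [hK] at hg1
      have hga : f a = g a := by
        have := hg2 a ⟨le_rfl, hab.le⟩
        rwa [harc a] at this
      have h := hg1 hs ⟨le_rfl, hab.le⟩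
      simp only [ENNReal.coe_zero, zero_mul, nonpos_iff_eq_zero, edist_eq_zero] at h
      show f a = g s
      rw [hga, h]
  · -- main case
    haveI : Nonempty H := ⟨0⟩
    obtain ⟨V, hVdef⟩ : ∃ V' : ℝ → ℝ, V' = auxV a f := ⟨_, rfl⟩
    have hVb : 0 < V b := by
      rw [hVdef]
      exact ENNReal.toReal_pos hV0 hBV
    have hba : (0:ℝ) < b - a := by linarith
    obtain ⟨κ, hκdef⟩ : ∃ k : ℝ, k = V b / (b - a) := ⟨_, rfl⟩
    have hκ : 0 < κ := by rw [hκdef]; exact div_pos hVb hba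
    obtain ⟨ℓ, hℓdef⟩ : ∃ l : ℝ → ℝ, l = fun t => a + (b - a) * V t / V b := ⟨_, rfl⟩
    have harc : ∀ t, arcLength a b f t = ℓ t := fun t => by
      simp only [arcLength, if_neg hV0, hℓdef, hVdef, auxV]
    have harcfun : arcLength a b f = ℓ := funext harc
    have hVa : V a = 0 := by rw [hVdef]; exact auxV_of_le le_rfl
    have hV0' : ∀ x, x ≤ a → V x = 0 := fun x hx => by rw [hVdef]; exact auxV_of_le hx
    have hVnn : ∀ x : ℝ, 0 ≤ V x := fun x => by rw [hVdef]; exact ENNReal.toReal_nonneg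
    have hVmono : ∀ {x y : ℝ}, x ≤ y → y ≤ b → V x ≤ V y := fun hxy hy => by
      rw [hVdef]; exact auxV_mono hBV hxy hy
    have hdistV : ∀ {x y : ℝ}, a ≤ x → x ≤ y → y ≤ b → dist (f x) (f y) ≤ V y - V x :=
      fun hx hxy hy => by rw [hVdef]; exact aux_dist_le hBV hx hxy hy
    have hℓa : ℓ a = a := by simp [hℓdef, hVa]
    have hℓb : ℓ b = b := by
      simp only [hℓdef]
      rw [mul_div_assoc, div_self hVb.ne', mul_one]
      ring
    -- left limits of V and ℓ
    have hIio : ∀ t : ℝ, (V '' Iio t).Nonempty := fun t => (nonempty_Iio).image _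
    have hbddV : ∀ t : ℝ, t ≤ b → BddAbove (V '' Iio t) := by
      intro t ht
      refine ⟨V b, ?_⟩
      rintro _ ⟨x, hx, rfl⟩
      exact hVmono (hx.le.trans ht) le_rfl
    obtain ⟨Vl, hVldef⟩ : ∃ w : ℝ → ℝ, w = fun t => sSup (V '' Iio t) := ⟨_, rfl⟩
    obtain ⟨Ll, hLldef⟩ : ∃ w : ℝ → ℝ, w = fun t => a + (b - a) * Vl t / V b := ⟨_, rfl⟩
    have hVlle : ∀ t, t ≤ b → Vl t ≤ V t := by
      intro t ht
      simp only [hVldef]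
      refine csSup_le (hIio t) ?_
      rintro _ ⟨x, hx, rfl⟩
      exact hVmono hx.le ht
    have hVlge : ∀ {x t : ℝ}, x < t → t ≤ b → V x ≤ Vl t := fun {x t} hx ht => by
      simp only [hVldef]
      exact le_csSup (hbddV t ht) ⟨x, hx, rfl⟩
    have hVlnn : ∀ t : ℝ, t ≤ b → 0 ≤ Vl t := fun t ht =>
      (hVnn (t - 1)).trans (hVlge (sub_one_lt t) ht)
    have hVla : Vl a = V a := le_antisymm (hVlle a hab.le) (by rw [hVa]; exact hVlnn a hab.le)
    have hVltendsto : ∀ t, t ≤ b → Tendsto V (𝓝[<] t) (𝓝 (Vl t)) := by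
      intro t ht
      have := MonotoneOn.tendsto_nhdsLT
        (f := V) (x := t) (fun x hx y hy hxy => hVmono hxy ((le_of_lt hy).trans ht)) (hbddV t ht)
      simpa only [hVldef] using this
    have hLlt : ∀ t, t ≤ b → Tendsto ℓ (𝓝[<] t) (𝓝 (Ll t)) := by
      intro t ht
      simp only [hℓdef, hLldef]
      exact tendsto_const_nhds.add (((hVltendsto t ht).const_mul (b - a)).div_const (V b))
    -- scaling identities
    have hsc : ∀ x y : ℝ, κ * (ℓ y - ℓ x) = V y - V x := by
      intro x y
      simp only [hℓdef, hκdef]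
      field_simp
      ring
    have hscl : ∀ x y : ℝ, κ * (Ll y - ℓ x) = Vl y - V x := by
      intro x y
      simp only [hℓdef, hLldef, hκdef]
      field_simp
      ring
    have hscL : ∀ x y : ℝ, κ * (ℓ y - Ll x) = V y - Vl x := by
      intro x y
      simp only [hℓdef, hLldef, hκdef]
      field_simp
      ring
    have hℓmono : ∀ {x y : ℝ}, V x ≤ V y → ℓ x ≤ ℓ y := by
      intro x y h
      have := hsc x y
      nlinarith
    have hℓLl : ∀ {x y : ℝ}, V x ≤ Vl y → ℓ x ≤ Ll y := by
      intro x y h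
      have := hscl x y
      nlinarith
    have hLlℓ : ∀ {x y : ℝ}, Vl x ≤ V y → Ll x ≤ ℓ y := by
      intro x y h
      have := hscL x y
      nlinarith
    have hVinj : ∀ {x y : ℝ}, ℓ x = ℓ y → V x = V y := by
      intro x y hxy
      have h := hsc x y
      rw [hxy, sub_self, mul_zero] at h
      linarith
    have hVlinj : ∀ {x y : ℝ}, ℓ x = Ll y → V x = Vl y := by
      intro x y hxy
      have h := hscl x y
      rw [hxy, sub_self, mul_zero] at h
      linarith
    have hℓle_b : ∀ t, t ≤ b → ℓ t ≤ b := by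
      intro t ht
      have h := hsc t b
      rw [hℓb] at h
      have := hVmono ht (le_refl b)
      nlinarith
    have hℓge_a : ∀ t, a ≤ t → a ≤ ℓ t := by
      intro t ht
      have h := hsc a t
      rw [hℓa, hVa] at h
      have := hVnn t
      nlinarith
    have hLla : ∀ t : ℝ, t ≤ b → a ≤ Ll t := by
      intro t ht
      have h2 : 0 ≤ (b - a) * Vl t / V b := div_nonneg (mul_nonneg hba.le (hVlnn t ht)) hVb.le
      simp only [hLldef]
      linarith
    -- left limits of f
    obtain ⟨fL, hfLdef⟩ : ∃ w : ℝ → H, w = fun t => limUnder (𝓝[<] t) f := ⟨_, rfl⟩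
    have hfL : ∀ t, a < t → t ≤ b → Tendsto f (𝓝[<] t) (𝓝 (fL t)) := by
      intro t h1 h2
      obtain ⟨fl, hfl⟩ := aux_leftLim hBV h1 h2
      simp only [hfLdef]
      rwa [hfl.limUnder_eq]
    have hfLd1 : ∀ t x, a ≤ x → x < t → t ≤ b → dist (f x) (fL t) ≤ Vl t - V x := by
      intro t x hax hxt htb'
      have htend : Tendsto (fun y => dist (f x) (f y)) (𝓝[<] t) (𝓝 (dist (f x) (fL t))) :=
        tendsto_const_nhds.dist (hfL t (lt_of_le_of_lt hax hxt) htb')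
      refine le_of_tendsto htend ?_
      filter_upwards [Ioo_mem_nhdsLT_of_mem (⟨hxt, le_rfl⟩ : t ∈ Ioc x t)] with y hy
      have h1 : dist (f x) (f y) ≤ V y - V x := hdistV hax hy.1.le (hy.2.le.trans htb')
      have h2 : V y ≤ Vl t := hVlge hy.2 htb'
      linarith
    have hfLd2 : ∀ t, a < t → t ≤ b → dist (fL t) (f t) ≤ V t - Vl t := by
      intro t h1 h2
      have htend : Tendsto (fun y => dist (f y) (f t)) (𝓝[<] t) (𝓝 (dist (fL t) (f t))) :=
        (hfL t h1 h2).dist tendsto_const_nhds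
      have htend2 : Tendsto (fun y => V t - V y) (𝓝[<] t) (𝓝 (V t - Vl t)) :=
        tendsto_const_nhds.sub (hVltendsto t h2)
      refine le_of_tendsto_of_tendsto htend htend2 ?_
      filter_upwards [Ioo_mem_nhdsLT_of_mem (⟨h1, le_rfl⟩ : t ∈ Ioc a t)] with y hy
      exact hdistV hy.1.le hy.2.le h2
    have hfLeq : ∀ t u, a ≤ u → u < t → t ≤ b → Vl t = V u → fL t = f u := by
      intro t u h1 h2 h3 h4
      have h5 := hfLd1 t u h1 h2 h3
      rw [h4, sub_self] at h5
      rw [dist_comm] at h5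
      exact dist_le_zero.1 h5
    have hnjump : ∀ t, a < t → t ≤ b → Vl t = V t → fL t = f t := by
      intro t h1 h2 h3
      have h5 := hfLd2 t h1 h2
      rw [h3, sub_self] at h5
      exact dist_le_zero.1 h5
    -- the pseudo-inverse τ
    obtain ⟨T, hTdef⟩ : ∃ w : ℝ → Set ℝ, w = fun s => {t | t ∈ Icc a b ∧ s ≤ ℓ t} := ⟨_, rfl⟩
    obtain ⟨τ, hτdef⟩ : ∃ w : ℝ → ℝ, w = fun s => sInf (T s) := ⟨_, rfl⟩
    have hTb : ∀ s, s ≤ b → b ∈ T s := fun s hs => by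
      rw [hTdef]
      exact ⟨⟨hab.le, le_rfl⟩, by rw [hℓb]; exact hs⟩
    have hTmem : ∀ s t, t ∈ T s ↔ (t ∈ Icc a b ∧ s ≤ ℓ t) := fun s t => by rw [hTdef]; rfl
    have hTbdd : ∀ s, BddBelow (T s) := fun s => ⟨a, fun t ht => ((hTmem s t).1 ht).1.1⟩
    have hτmem : ∀ s, s ≤ b → a ≤ τ s ∧ τ s ≤ b := fun s hs => by
      rw [hτdef]
      exact ⟨le_csInf ⟨b, hTb s hs⟩ (fun t ht => ((hTmem s t).1 ht).1.1),
        csInf_le (hTbdd s) (hTb s hs)⟩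
    have hτle : ∀ s t, t ∈ Icc a b → s ≤ ℓ t → τ s ≤ t := fun s t h1 h2 => by
      rw [hτdef]
      exact csInf_le (hTbdd s) ((hTmem s t).2 ⟨h1, h2⟩)
    have hτmono : ∀ s1 s2, s1 ≤ s2 → s2 ≤ b → τ s1 ≤ τ s2 := fun s1 s2 h hs2 => by
      rw [hτdef]
      exact le_csInf ⟨b, hTb s2 hs2⟩ (fun t ht => by
        exact csInf_le (hTbdd s1) ((hTmem s1 t).2
          ⟨((hTmem s2 t).1 ht).1, h.trans ((hTmem s2 t).1 ht).2⟩))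
    have hτs : ∀ s, τ s = sInf (T s) := fun s => by rw [hτdef]
    have hℓτ : ∀ s, a ≤ s → s ≤ b → s ≤ ℓ (τ s) := by
      intro s has hsb
      obtain ⟨hτa, hτb⟩ := hτmem s hsb
      by_contra hcon
      push_neg at hcon
      have hτlt : τ s < b := by
        rcases lt_or_eq_of_le hτb with h | h
        · exact h
        · rw [h, hℓb] at hcon
          exact absurd hsb (not_le.2 hcon)
      have hεpos : 0 < (s - ℓ (τ s)) * κ / 4 :=
        div_pos (mul_pos (by linarith) hκ) (by norm_num)
      obtain ⟨x, hx1, hx2, hx3⟩ := aux_varRC hBV (hrc (τ s) ⟨hτa, hτlt⟩) hτa hτlt hεpos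
      obtain ⟨y, hy, hyx⟩ := exists_lt_of_csInf_lt ⟨b, hTb s hsb⟩ (by rw [← hτs s]; exact hx1)
      obtain ⟨hy1, hy2⟩ := (hTmem s y).1 hy
      have h5 : s ≤ ℓ x := le_trans hy2 (hℓmono (hVmono hyx.le hx2))
      have h6 : V x - V (τ s) ≤ 2 * ((s - ℓ (τ s)) * κ / 4) := by
        have h6' := auxV_sub hBV hτa hx1.le hx2
        rw [h6'] at hx3
        rw [hVdef]
        linarith
      have h7 := hsc (τ s) x
      have h8 : κ * (s - ℓ (τ s)) ≤ κ * (ℓ x - ℓ (τ s)) :=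
        mul_le_mul_of_nonneg_left (by linarith) hκ.le
      have h9 : 0 < κ * (s - ℓ (τ s)) := mul_pos hκ (by linarith)
      linarith
    have hLls : ∀ s, a ≤ s → s ≤ b → Ll (τ s) ≤ s := by
      intro s hsa hsb
      obtain ⟨hua, hub⟩ := hτmem s hsb
      have hV' : Vl (τ s) ≤ κ * (s - a) := by
        simp only [hVldef]
        refine csSup_le (hIio _) ?_
        rintro _ ⟨x, hx, rfl⟩
        rcases le_or_gt a x with hax | hax
        · have hℓx : ℓ x < s := by
            by_contra hc
            push_neg at hc
            exact absurd (hτle s x ⟨hax, hx.le.trans hub⟩ hc) (not_le.2 hx)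
          have h8 := hsc a x
          rw [hℓa, hVa] at h8
          nlinarith
        · rw [hV0' x hax.le]
          nlinarith
      have h2 := hscl a (τ s)
      rw [hℓa, hVa] at h2
      nlinarith
    -- definition of the Lipschitz reparametrization
    obtain ⟨ft, hftdef⟩ : ∃ w : ℝ → H, w = fun s =>
        if Vl (τ s) = V (τ s) then f (τ s)
        else ((ℓ (τ s) - s) / (ℓ (τ s) - Ll (τ s))) • fL (τ s) +
          ((s - Ll (τ s)) / (ℓ (τ s) - Ll (τ s))) • f (τ s) := ⟨_, rfl⟩
    have hdpos : ∀ t, t ≤ b → Vl t ≠ V t → 0 < ℓ t - Ll t := by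
      intro t h2 h3
      have h4 : Vl t < V t := lt_of_le_of_ne (hVlle t h2) h3
      have h5 := hscL t t
      nlinarith
    have hfteval : ∀ s : ℝ, a ≤ τ s → τ s ≤ b → s = ℓ (τ s) → ft s = f (τ s) := by
      intro s h1 h2 hs
      simp only [hftdef]
      set u := τ s with hu
      split_ifs with h
      · rfl
      · have hd := hdpos u h2 h
        rw [hs, sub_self, zero_div, zero_smul, zero_add, div_self (ne_of_gt hd), one_smul]
    have hnormsmul : ∀ (c : ℝ) (v : H), 0 ≤ c → ‖c • v‖ = c * ‖v‖ := fun c v hc => by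
      rw [norm_smul, Real.norm_eq_abs, abs_of_nonneg hc]
    have hjd : ∀ u, a < u → u ≤ b → dist (fL u) (f u) ≤ κ * (ℓ u - Ll u) := by
      intro u h1 h2
      have h3 := hfLd2 u h1 h2
      have h4 := hscL u u
      linarith
    -- two fundamental distance estimates for ft
    have hI : ∀ s, a ≤ s → s ≤ b → dist (ft s) (f (τ s)) ≤ κ * (ℓ (τ s) - s) := by
      intro s hsa hsb
      obtain ⟨hua, hub⟩ := hτmem s hsb
      have hsℓu : s ≤ ℓ (τ s) := hℓτ s hsa hsb
      have hLl : Ll (τ s) ≤ s := hLls s hsa hsb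
      set u := τ s with hu
      simp only [hftdef]
      rw [← hu]
      split_ifs with h
      · rw [dist_self]
        nlinarith
      · have hd := hdpos u hub h
        have hdne : ℓ u - Ll u ≠ 0 := ne_of_gt hd
        have hua' : a < u := lt_of_le_of_ne hua (fun h' => h (h' ▸ hVla))
        rw [dist_eq_norm]
        have hkey : (((ℓ u - s) / (ℓ u - Ll u)) • fL u + ((s - Ll u) / (ℓ u - Ll u)) • f u) - f u
            = ((ℓ u - s) / (ℓ u - Ll u)) • (fL u - f u) := by
          have hcoef : (s - Ll u) / (ℓ u - Ll u) = 1 - (ℓ u - s) / (ℓ u - Ll u) := by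
            field_simp
            try ring
          rw [hcoef, sub_smul, one_smul, smul_sub]
          abel
        rw [hkey, hnormsmul _ _ (div_nonneg (by linarith) hd.le)]
        have hnorm : ‖fL u - f u‖ ≤ κ * (ℓ u - Ll u) := by
          rw [← dist_eq_norm]
          exact hjd u hua' hub
        calc (ℓ u - s) / (ℓ u - Ll u) * ‖fL u - f u‖
            ≤ (ℓ u - s) / (ℓ u - Ll u) * (κ * (ℓ u - Ll u)) :=
              mul_le_mul_of_nonneg_left hnorm (div_nonneg (by linarith) hd.le)
          _ = κ * (ℓ u - s) := by
              field_simp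
              try ring
    have hII : ∀ s, a ≤ s → s ≤ b → a < τ s → dist (ft s) (fL (τ s)) ≤ κ * (s - Ll (τ s)) := by
      intro s hsa hsb hua'
      obtain ⟨hua, hub⟩ := hτmem s hsb
      have hsℓu : s ≤ ℓ (τ s) := hℓτ s hsa hsb
      have hLl : Ll (τ s) ≤ s := hLls s hsa hsb
      set u := τ s with hu
      simp only [hftdef]
      rw [← hu]
      split_ifs with h
      · rw [hnjump u hua' hub h, dist_self]
        nlinarith
      · have hd := hdpos u hub h
        have hdne : ℓ u - Ll u ≠ 0 := ne_of_gt hd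
        rw [dist_eq_norm]
        have hkey : (((ℓ u - s) / (ℓ u - Ll u)) • fL u + ((s - Ll u) / (ℓ u - Ll u)) • f u) - fL u
            = ((s - Ll u) / (ℓ u - Ll u)) • (f u - fL u) := by
          have hcoef : (ℓ u - s) / (ℓ u - Ll u) = 1 - (s - Ll u) / (ℓ u - Ll u) := by
            field_simp
            try ring
          rw [hcoef, sub_smul, one_smul, smul_sub]
          abel
        rw [hkey, hnormsmul _ _ (div_nonneg (by linarith) hd.le)]
        have hnorm : ‖f u - fL u‖ ≤ κ * (ℓ u - Ll u) := by
          rw [← dist_eq_norm, dist_comm]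
          exact hjd u hua' hub
        calc (s - Ll u) / (ℓ u - Ll u) * ‖f u - fL u‖
            ≤ (s - Ll u) / (ℓ u - Ll u) * (κ * (ℓ u - Ll u)) :=
              mul_le_mul_of_nonneg_left hnorm (div_nonneg (by linarith) hd.le)
          _ = κ * (s - Ll u) := by
              field_simp
              try ring
    -- the key Lipschitz estimate
    have hkeyL : ∀ s1 s2, a ≤ s1 → s1 ≤ s2 → s2 ≤ b → dist (ft s1) (ft s2) ≤ κ * (s2 - s1) := by
      intro s1 s2 h1 h12 h2
      have h1b : s1 ≤ b := h12.trans h2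
      have h2a : a ≤ s2 := h1.trans h12
      have hτ12 : τ s1 ≤ τ s2 := hτmono s1 s2 h12 h2
      rcases eq_or_lt_of_le hτ12 with he | hlt
      · -- same fiber
        obtain ⟨hua, hub⟩ := hτmem s1 h1b
        have hs1ℓ : s1 ≤ ℓ (τ s1) := hℓτ s1 h1 h1b
        have hs2ℓ : s2 ≤ ℓ (τ s1) := by rw [he]; exact hℓτ s2 h2a h2
        have hLl1 : Ll (τ s1) ≤ s1 := hLls s1 h1 h1b
        set u := τ s1 with hu
        have he2 : τ s2 = u := he.symm
        simp only [hftdef]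
        rw [← hu, he2]
        split_ifs with h
        · rw [dist_self]
          nlinarith
        · have hd := hdpos u hub h
          have hdne : ℓ u - Ll u ≠ 0 := ne_of_gt hd
          have hua' : a < u := lt_of_le_of_ne hua (fun h' => h (h' ▸ hVla))
          rw [dist_eq_norm]
          have hkey : (((ℓ u - s1) / (ℓ u - Ll u)) • fL u + ((s1 - Ll u) / (ℓ u - Ll u)) • f u)
              - (((ℓ u - s2) / (ℓ u - Ll u)) • fL u + ((s2 - Ll u) / (ℓ u - Ll u)) • f u)
              = ((s2 - s1) / (ℓ u - Ll u)) • (fL u - f u) := by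
            have e1 : (ℓ u - s1) / (ℓ u - Ll u) = (ℓ u - s2) / (ℓ u - Ll u)
                + (s2 - s1) / (ℓ u - Ll u) := by
              field_simp
              try ring
            have e2 : (s1 - Ll u) / (ℓ u - Ll u) = (s2 - Ll u) / (ℓ u - Ll u)
                - (s2 - s1) / (ℓ u - Ll u) := by
              field_simp
              try ring
            rw [e1, e2, add_smul, sub_smul, smul_sub]
            abel
          rw [hkey, hnormsmul _ _ (div_nonneg (by linarith) hd.le)]
          have hnorm : ‖fL u - f u‖ ≤ κ * (ℓ u - Ll u) := by
            rw [← dist_eq_norm]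
            exact hjd u hua' hub
          calc (s2 - s1) / (ℓ u - Ll u) * ‖fL u - f u‖
              ≤ (s2 - s1) / (ℓ u - Ll u) * (κ * (ℓ u - Ll u)) :=
                mul_le_mul_of_nonneg_left hnorm (div_nonneg (by linarith) hd.le)
            _ = κ * (s2 - s1) := by
                field_simp
                try ring
      · -- strictly increasing fibers
        obtain ⟨h1a, h1b'⟩ := hτmem s1 h1b
        obtain ⟨h2a', h2b⟩ := hτmem s2 h2
        have ht2a : a < τ s2 := lt_of_le_of_lt h1a hlt
        have hs1ℓ : s1 ≤ ℓ (τ s1) := hℓτ s1 h1 h1b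
        have hLl2 : Ll (τ s2) ≤ s2 := hLls s2 h2a h2
        have hd13 : dist (f (τ s1)) (fL (τ s2)) ≤ Vl (τ s2) - V (τ s1) :=
          hfLd1 (τ s2) (τ s1) h1a hlt h2b
        have hscd := hscl (τ s1) (τ s2)
        calc dist (ft s1) (ft s2)
            ≤ dist (ft s1) (f (τ s1)) + dist (f (τ s1)) (fL (τ s2)) + dist (fL (τ s2)) (ft s2) :=
              dist_triangle4 _ _ _ _
          _ ≤ κ * (ℓ (τ s1) - s1) + (Vl (τ s2) - V (τ s1)) + κ * (s2 - Ll (τ s2)) := by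
              refine add_le_add (add_le_add (hI s1 h1 h1b) hd13) ?_
              rw [dist_comm]
              exact hII s2 h2a h2 ht2a
          _ ≤ κ * (s2 - s1) := by linarith
    -- the master interpolation formula
    have master : ∀ t, a ≤ t → t ≤ b → ∀ lam, 0 ≤ lam → lam ≤ 1 →
        ft (Ll t * (1 - lam) + ℓ t * lam) =
          (1 - lam) • (if t = a then f a else fL t) + lam • f t := by
      intro t hta htb' lam h0 h1
      set s := Ll t * (1 - lam) + ℓ t * lam with hsdef
      have hLℓ : Ll t ≤ ℓ t := hLlℓ (hVlle t htb')
      have hsLl : Ll t ≤ s := by nlinarith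
      have hsℓ : s ≤ ℓ t := by nlinarith
      have hsa : a ≤ s := le_trans (hLla t htb') hsLl
      have hsb : s ≤ b := le_trans hsℓ (hℓle_b t htb')
      have hut : τ s ≤ t := hτle s t ⟨hta, htb'⟩ hsℓ
      obtain ⟨hua, hub⟩ := hτmem s hsb
      have hsℓu : s ≤ ℓ (τ s) := hℓτ s hsa hsb
      set u := τ s with hu
      by_cases hnj : Vl t = V t
      · -- no jump at t
        have hLleq : Ll t = ℓ t := by simp only [hLldef, hℓdef, hnj]
        have hseq : s = ℓ t := by rw [hsdef, hLleq]; ring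
        have hℓueq : ℓ u = ℓ t := le_antisymm (hℓmono (hVmono hut htb')) (hseq ▸ hsℓu)
        have hVueq : V u = V t := hVinj hℓueq
        have hfu : f u = f t := by
          have h9 := hdistV hua hut htb'
          rw [hVueq, sub_self] at h9
          exact dist_le_zero.1 h9
        have hFL : (if t = a then f a else fL t) = f t := by
          split_ifs with h
          · rw [h]
          · exact hnjump t (lt_of_le_of_ne hta (Ne.symm h)) htb' hnj
        rw [hfteval s hua hub (hseq.trans hℓueq.symm), hfu, hFL]
        exact (Convex.combo_self (by ring) (f t)).symm
      · -- jump at t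
        have htna : t ≠ a := fun h => hnj (h ▸ hVla)
        have hta' : a < t := lt_of_le_of_ne hta (Ne.symm htna)
        have hd := hdpos t htb' hnj
        have hdne : ℓ t - Ll t ≠ 0 := ne_of_gt hd
        rcases eq_or_lt_of_le h0 with h0' | h0'
        · -- lam = 0
          have hseq : s = Ll t := by rw [hsdef, ← h0']; ring
          have hgoal : ft s = fL t := by
            rcases eq_or_lt_of_le hut with hut' | hut'
            · simp only [hftdef]
              rw [← hu, hut', if_neg hnj, hseq, sub_self, zero_div, zero_smul, add_zero,
                div_self hdne, one_smul]
            · have hℓuLl : ℓ u ≤ Ll t := hℓLl (hVlge hut' htb')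
              have hℓueq : ℓ u = s := le_antisymm (hseq ▸ hℓuLl) hsℓu
              have hVu : V u = Vl t := hVlinj (hℓueq.trans hseq)
              have hfLu : fL t = f u := hfLeq t u hua hut' htb' hVu.symm
              rw [hfteval s hua hub hℓueq.symm, hfLu]
          rw [hgoal, ← h0', if_neg htna]
          simp
        · -- lam > 0
          have hsLl' : Ll t < s := by nlinarith
          have hut' : u = t := by
            rcases eq_or_lt_of_le hut with h | h
            · exact h
            · exfalso
              have h9 : ℓ u ≤ Ll t := hℓLl (hVlge h htb')
              linarith
          simp only [hftdef]
          rw [← hu, hut', if_neg hnj, if_neg htna]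
          have hc1 : (ℓ t - s) / (ℓ t - Ll t) = 1 - lam := by
            rw [hsdef]
            field_simp
            try ring
          have hc2 : (s - Ll t) / (ℓ t - Ll t) = lam := by
            rw [hsdef]
            field_simp
            try ring
          rw [hc1, hc2]
    -- assemble the four conditions
    refine ⟨ft, ⟨?_, ?_, ?_⟩, ?_⟩
    · -- Lipschitz
      have hKcoe : ((((eVariationOn f (Icc a b)).toReal / (b - a)).toNNReal : NNReal) : ℝ) = κ := by
        rw [Real.coe_toNNReal _ (div_nonneg ENNReal.toReal_nonneg hba.le), hκdef, hVdef]
        simp only [auxV]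
      apply LipschitzOnWith.of_dist_le_mul
      intro x hx y hy
      rw [hKcoe]
      rcases le_total x y with h | h
      · calc dist (ft x) (ft y) ≤ κ * (y - x) := hkeyL x y hx.1 h hy.2
          _ = κ * dist x y := by
              rw [Real.dist_eq, abs_of_nonpos (by linarith : x - y ≤ 0)]
              ring
      · calc dist (ft x) (ft y) = dist (ft y) (ft x) := dist_comm _ _
          _ ≤ κ * (x - y) := hkeyL y x hy.1 h hx.2
          _ = κ * dist x y := by
              rw [Real.dist_eq, abs_of_nonneg (by linarith : 0 ≤ x - y)]
    · -- factorization
      intro t ht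
      have h1 := master t ht.1 ht.2 1 zero_le_one le_rfl
      simp only [sub_self, mul_zero, zero_add, mul_one, zero_smul, one_smul] at h1
      rw [harc]
      exact h1.symm
    · -- left limits and interpolation
      intro t ht
      refine ⟨if t = a then f a else fL t, Ll t, ?_, ?_⟩
      · by_cases h : t = a
        · rw [if_pos h]
          subst h
          refine ⟨if_pos rfl, ?_⟩
          rw [harc]
          simp only [hLldef, hℓdef, hVla]
        · rw [if_neg h]
          have hta' : a < t := lt_of_le_of_ne ht.1 (Ne.symm h)
          exact ⟨by rw [if_neg h]; exact hfL t hta' ht.2, by rw [harcfun]; exact hLlt t ht.2⟩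
      · intro lam hlam
        rw [harc]
        exact master t ht.1 ht.2 lam hlam.1 hlam.2
    · -- uniqueness
      rintro g ⟨-, -, hg3⟩ s hs
      obtain ⟨hsa, hsb⟩ := hs
      obtain ⟨hua, hub⟩ := hτmem s hsb
      have hsℓ : s ≤ ℓ (τ s) := hℓτ s hsa hsb
      have hsLl : Ll (τ s) ≤ s := hLls s hsa hsb
      set u := τ s with hu
      obtain ⟨fl, ll, hif, hinterp⟩ := hg3 u ⟨hua, hub⟩
      have hfl1 : fl = (if u = a then f a else fL u) := by
        by_cases h : u = a
        · rw [if_pos h] at hif ⊢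
          exact hif.1
        · rw [if_neg h] at hif ⊢
          have hua' : a < u := lt_of_le_of_ne hua (Ne.symm h)
          exact tendsto_nhds_unique hif.1 (hfL u hua' hub)
      have hfl2 : ll = Ll u := by
        by_cases h : u = a
        · rw [if_pos h] at hif
          rw [hif.2, h, harc]
          simp only [hLldef, hℓdef, hVla]
        · rw [if_neg h] at hif
          exact tendsto_nhds_unique hif.2 (by rw [harcfun]; exact hLlt u hub)
      by_cases hnj : Vl u = V u
      · -- no jump
        have hLleq : Ll u = ℓ u := by simp only [hLldef, hℓdef, hnj]
        have hseq : s = ℓ u := le_antisymm hsℓ (by rw [← hLleq]; exact hsLl)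
        have hg := hinterp 1 ⟨zero_le_one, le_rfl⟩
        rw [harc] at hg
        simp only [sub_self, mul_zero, zero_add, mul_one, zero_smul, one_smul] at hg
        rw [hfteval s hua hub hseq, ← hu, hseq, hg]
      · -- jump
        have hd := hdpos u hub hnj
        have hdne : ℓ u - Ll u ≠ 0 := ne_of_gt hd
        have hua' : a < u := lt_of_le_of_ne hua (fun h' => hnj (h' ▸ hVla))
        set lam := (s - Ll u) / (ℓ u - Ll u) with hlamdef
        have hlam0 : 0 ≤ lam := div_nonneg (by linarith) hd.le
        have hlam1 : lam ≤ 1 := by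
          rw [hlamdef, div_le_one hd]
          linarith
        have hg := hinterp lam ⟨hlam0, hlam1⟩
        rw [harc, hfl1, hfl2, if_neg hua'.ne'] at hg
        have harg : Ll u * (1 - lam) + ℓ u * lam = s := by
          rw [hlamdef]
          field_simp
          try ring
        rw [harg] at hg
        simp only [hftdef]
        rw [← hu, if_neg hnj]
        have hc1 : (ℓ u - s) / (ℓ u - Ll u) = 1 - lam := by
          rw [hlamdef]
          field_simp
          try ring
        rw [hg, hc1, ← hlamdef]
end

section
/- (Integral characterization of the sweeping differential inclusion.) Let H be a real Hilbert space, a < b, μ a positive finite Borel measure on [a,b), B a Borel subset of [a,b) with μ(B) ≠ 0, C : [a,b) → Conv_H right continuous of bounded variation (w.r.t. the Hausdorff distance), v ∈ L¹(μ; H), and y : [a,b) → H right continuous with bounded variation satisfying y(t) ∈ C(t) for all t. Then the following are equivalent: (i) −v(t) ∈ N_{C(t)}(y(t)) for μ-a.e. t ∈ B; (ii) ∫_B ⟨y(t) − z(t), v(t)⟩ dμ(t) ≤ 0 for every μ-measurable selection z : [a,b) → H with z(t) ∈ C(t) for all t ∈ B. -/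
open Set Filter Topology MeasureTheory TopologicalSpace EMetric
open scoped RealInnerProductSpace ENNReal

/-- The exterior normal cone of the convex set `K` at `x`. -/
def normalCone {H : Type*} [NormedAddCommGroup H] [InnerProductSpace ℝ H]
    (K : Set H) (x : H) : Set H :=
  {u | ∀ v ∈ K, ⟪u, v - x⟫ ≤ 0}

section aux

variable {H : Type*} [NormedAddCommGroup H] [InnerProductSpace ℝ H]

open Classical in
/-- Metric projection onto a set (defined when a variational-inequality point exists). -/
noncomputable def cproj (K : Set H) (x : H) : H :=
  if h : ∃ p, p ∈ K ∧ ∀ w ∈ K, ⟪x - p, w - p⟫ ≤ 0 then h.choose else x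

lemma cproj_exists [CompleteSpace H] {K : Set H} (hne : K.Nonempty) (hcl : IsClosed K)
    (hconv : Convex ℝ K) (x : H) :
    ∃ p, p ∈ K ∧ ∀ w ∈ K, ⟪x - p, w - p⟫ ≤ 0 := by
  obtain ⟨p, hpK, hp⟩ := exists_norm_eq_iInf_of_complete_convex hne
    (hcl.isComplete) hconv x
  exact ⟨p, hpK, (norm_eq_iInf_iff_real_inner_le_zero hconv hpK).1 hp⟩

lemma cproj_spec [CompleteSpace H] {K : Set H} (hne : K.Nonempty) (hcl : IsClosed K)
    (hconv : Convex ℝ K) (x : H) :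
    cproj K x ∈ K ∧ ∀ w ∈ K, ⟪x - cproj K x, w - cproj K x⟫ ≤ 0 := by
  rw [cproj, dif_pos (cproj_exists hne hcl hconv x)]
  exact (cproj_exists hne hcl hconv x).choose_spec

/-- minimality -/
lemma norm_cproj_le [CompleteSpace H] {K : Set H} (hne : K.Nonempty) (hcl : IsClosed K)
    (hconv : Convex ℝ K) (x : H) {w : H} (hw : w ∈ K) :
    ‖x - cproj K x‖ ≤ ‖x - w‖ := by
  obtain ⟨hpK, hp⟩ := cproj_spec hne hcl hconv x
  set p := cproj K x
  have h1 : ⟪x - p, w - p⟫ ≤ 0 := hp w hw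
  have h2 : ‖x - w‖ ^ 2 = ‖x - p‖ ^ 2 - 2 * ⟪x - p, w - p⟫ + ‖w - p‖ ^ 2 := by
    have : x - w = (x - p) - (w - p) := by abel
    rw [this, @norm_sub_sq_real]
  nlinarith [sq_nonneg ‖w - p‖, norm_nonneg (x - w), norm_nonneg (x - p),
    sq_nonneg (‖x-w‖ - ‖x-p‖)]

lemma cproj_lipschitz [CompleteSpace H] {K : Set H} (hne : K.Nonempty) (hcl : IsClosed K)
    (hconv : Convex ℝ K) (x x' : H) :
    ‖cproj K x - cproj K x'‖ ≤ ‖x - x'‖ := by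
  obtain ⟨hpK, hp⟩ := cproj_spec hne hcl hconv x
  obtain ⟨hqK, hq⟩ := cproj_spec hne hcl hconv x'
  set p := cproj K x; set q := cproj K x'
  have h1 : ⟪x - p, q - p⟫ ≤ 0 := hp q hqK
  have h2 : ⟪x' - q, p - q⟫ ≤ 0 := hq p hpK
  have key : ‖p - q‖ ^ 2 ≤ ⟪x - x', p - q⟫ := by
    have e1 : ⟪x - p, q - p⟫ + ⟪x' - q, p - q⟫
        = ⟪x - x', q - p⟫ + ⟪q - p, q - p⟫ := by
      have : x - p = (x - x') + (x' - q) + (q - p) := by abel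
      rw [this, inner_add_left, inner_add_left]
      have h3 : ⟪x' - q, p - q⟫ = - ⟪x' - q, q - p⟫ := by
        rw [← inner_neg_right]; congr 1; abel
      rw [h3]; ring
    have e2 : ⟪q - p, q - p⟫ = ‖p - q‖ ^ 2 := by
      rw [real_inner_self_eq_norm_sq, ← norm_neg]; congr 1; abel
    have e3 : ⟪x - x', q - p⟫ = - ⟪x - x', p - q⟫ := by
      rw [← inner_neg_right]; congr 1; abel
    nlinarith
  have := real_inner_le_norm (x - x') (p - q)
  nlinarith [norm_nonneg (p - q), norm_nonneg (x - x')]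

/-- Key Hausdorff estimate for projections onto two nearby sets. -/
lemma cproj_haus [CompleteSpace H] {K K' : Set H}
    (hne : K.Nonempty) (hcl : IsClosed K) (hconv : Convex ℝ K)
    (hne' : K'.Nonempty) (hcl' : IsClosed K') (hconv' : Convex ℝ K')
    (x : H) {η : ℝ} (hη : 0 < η)
    (hd : hausdorffEdist K K' < ENNReal.ofReal η) :
    ‖cproj K x - cproj K' x‖ ^ 2 ≤ (2 * ‖x - cproj K x‖ + η) * η := by
  obtain ⟨hpK, hp⟩ := cproj_spec hne hcl hconv x
  obtain ⟨hqK, hq⟩ := cproj_spec hne' hcl' hconv' x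
  set p := cproj K x; set p' := cproj K' x
  -- q' ∈ K' close to p
  obtain ⟨q', hq'K, hq'd⟩ := exists_edist_lt_of_hausdorffEdist_lt hpK hd
  have hd' : hausdorffEdist K' K < ENNReal.ofReal η := by
    exact lt_of_eq_of_lt Metric.hausdorffEDist_comm hd
  -- q ∈ K close to p'
  obtain ⟨q, hqK2, hqd⟩ := exists_edist_lt_of_hausdorffEdist_lt hqK hd'
  have dpq' : ‖p - q'‖ < η := by rw [← dist_eq_norm]; exact edist_lt_ofReal.1 hq'd
  have dp'q : ‖p' - q‖ < η := by rw [← dist_eq_norm]; exact edist_lt_ofReal.1 hqd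
  have hxp' : ‖x - p'‖ ≤ ‖x - p‖ + η := by
    have h1 : ‖x - p'‖ ≤ ‖x - q'‖ := norm_cproj_le hne' hcl' hconv' x hq'K
    have h2 : ‖x - q'‖ ≤ ‖x - p‖ + ‖p - q'‖ := by
      have : x - q' = (x - p) + (p - q') := by abel
      rw [this]; exact norm_add_le _ _
    linarith
  have i1 : ⟪x - p, p' - p⟫ ≤ ‖x - p‖ * η := by
    have e : ⟪x - p, p' - p⟫ = ⟪x - p, q - p⟫ + ⟪x - p, p' - q⟫ := by
      rw [← inner_add_right]; congr 1; abel
    have h1 : ⟪x - p, q - p⟫ ≤ 0 := hp q hqK2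
    have h2 : ⟪x - p, p' - q⟫ ≤ ‖x - p‖ * ‖p' - q‖ := real_inner_le_norm _ _
    nlinarith [norm_nonneg (x - p)]
  have i2 : ⟪x - p', p - p'⟫ ≤ ‖x - p'‖ * η := by
    have e : ⟪x - p', p - p'⟫ = ⟪x - p', q' - p'⟫ + ⟪x - p', p - q'⟫ := by
      rw [← inner_add_right]; congr 1; abel
    have h1 : ⟪x - p', q' - p'⟫ ≤ 0 := hq q' hq'K
    have h2 : ⟪x - p', p - q'⟫ ≤ ‖x - p'‖ * ‖p - q'‖ := real_inner_le_norm _ _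
    nlinarith [norm_nonneg (x - p')]
  have e0 : ‖p - p'‖ ^ 2 = ⟪x - p', p - p'⟫ + ⟪x - p, p' - p⟫ := by
    have h1 : ⟪x - p, p' - p⟫ = - ⟪x - p, p - p'⟫ := by
      rw [← inner_neg_right]; congr 1; abel
    rw [h1, ← sub_eq_add_neg, ← inner_sub_left]
    have h2 : (x - p') - (x - p) = p - p' := by abel
    rw [h2, real_inner_self_eq_norm_sq]
  have hfin : ‖x - p'‖ * η ≤ (‖x - p‖ + η) * η :=
    mul_le_mul_of_nonneg_right hxp' hη.le
  nlinarith [norm_nonneg (x - p)]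

/-- Joint continuity of the projection in (set, point). -/
lemma cproj_tendsto [CompleteSpace H] {ι : Type*} {l : Filter ι}
    {K : ι → Set H} {K₀ : Set H}
    (hK : ∀ᶠ i in l, (K i).Nonempty ∧ IsClosed (K i) ∧ Convex ℝ (K i))
    (hne₀ : K₀.Nonempty) (hcl₀ : IsClosed K₀) (hconv₀ : Convex ℝ K₀)
    (hd : Tendsto (fun i => hausdorffEdist (K i) K₀) l (𝓝 0))
    {x : ι → H} {x₀ : H} (hx : Tendsto x l (𝓝 x₀)) :
    Tendsto (fun i => cproj (K i) (x i)) l (𝓝 (cproj K₀ x₀)) := by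
  rw [Metric.tendsto_nhds]
  intro ε hε
  set D := ‖x₀ - cproj K₀ x₀‖ with hD
  have hD0 : 0 ≤ D := norm_nonneg _
  set η : ℝ := min 1 ((ε/2)^2 / (2*D+1)) with hηdef
  have hη : 0 < η := lt_min one_pos (by positivity)
  have hpos : (0:ℝ≥0∞) < ENNReal.ofReal η := ENNReal.ofReal_pos.2 hη
  have h2 : ∀ᶠ i in l, hausdorffEdist (K i) K₀ < ENNReal.ofReal η :=
    hd.eventually (gt_mem_nhds hpos)
  have h3 : ∀ᶠ i in l, dist (x i) x₀ < ε/2 :=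
    hx.eventually (Metric.ball_mem_nhds _ (by positivity))
  filter_upwards [hK, h2, h3] with i hKi hdi hxi
  obtain ⟨hnei, hcli, hconvi⟩ := hKi
  have hdi' : hausdorffEdist K₀ (K i) < ENNReal.ofReal η := by
    exact lt_of_eq_of_lt Metric.hausdorffEDist_comm hdi
  have key : ‖cproj K₀ x₀ - cproj (K i) x₀‖ ^ 2 ≤ (2*D + η) * η :=
    cproj_haus hne₀ hcl₀ hconv₀ hnei hcli hconvi x₀ hη hdi'
  have hη1 : η ≤ 1 := min_le_left _ _
  have hη2 : η ≤ (ε/2)^2 / (2*D+1) := min_le_right _ _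
  have key2 : ‖cproj K₀ x₀ - cproj (K i) x₀‖ ^ 2 ≤ (ε/2)^2 := by
    have h4 : (2*D + η) * η ≤ (2*D + 1) * η := by nlinarith
    have h5 : (2*D + 1) * η ≤ (ε/2)^2 := by
      rw [le_div_iff₀ (by positivity : (0:ℝ) < 2*D+1)] at hη2
      nlinarith
    linarith
  have key3 : ‖cproj K₀ x₀ - cproj (K i) x₀‖ ≤ ε/2 := by
    nlinarith [norm_nonneg (cproj K₀ x₀ - cproj (K i) x₀), hε]
  have lip : ‖cproj (K i) (x i) - cproj (K i) x₀‖ ≤ ‖x i - x₀‖ :=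
    cproj_lipschitz hnei hcli hconvi _ _
  have tri : dist (cproj (K i) (x i)) (cproj K₀ x₀)
      ≤ ‖cproj (K i) (x i) - cproj (K i) x₀‖ + ‖cproj K₀ x₀ - cproj (K i) x₀‖ := by
    rw [dist_eq_norm]
    have : cproj (K i) (x i) - cproj K₀ x₀
        = (cproj (K i) (x i) - cproj (K i) x₀) - (cproj K₀ x₀ - cproj (K i) x₀) := by abel
    rw [this]
    exact norm_sub_le _ _
  have hxi' : ‖x i - x₀‖ < ε/2 := by rwa [← dist_eq_norm]
  linarith

end aux

/-- A function right-continuous on `[a,b)` off a countable set is a.e. strongly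
measurable on `[a,b)`. -/
lemma aesm_of_rightCont {E : Type*} [NormedAddCommGroup E] {a b : ℝ} {S : Set ℝ}
    (hS : S.Countable) (f : ℝ → E)
    (hf : ∀ t ∈ Ico a b, t ∉ S → ContinuousWithinAt f (Ici t) t) (μ : Measure ℝ) :
    AEStronglyMeasurable f (μ.restrict (Ico a b)) := by
  classical
  letI : MeasurableSpace E := borel E
  haveI : BorelSpace E := ⟨rfl⟩
  set u : ℕ → ℝ → ℝ := fun n t => a + (⌈(t - a) * 2^n⌉ : ℝ) / 2^n with hu
  have hum : ∀ n, Measurable (u n) := by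
    intro n
    apply measurable_const.add
    have h1 : Measurable fun t : ℝ => (t - a) * 2^n :=
      (measurable_id.sub measurable_const).mul_const _
    have h2 : Measurable fun t : ℝ => ⌈(t - a) * 2^n⌉ := h1.ceil
    exact (measurable_from_top.comp h2).div_const _
  have hurange : ∀ n, (range (u n)).Countable := by
    intro n
    have : range (u n) ⊆ range (fun k : ℤ => a + (k : ℝ) / 2^n) := by
      rintro _ ⟨t, rfl⟩
      exact ⟨⌈(t - a) * 2^n⌉, rfl⟩
    exact (countable_range _).mono this
  have hpre : ∀ n (S : Set ℝ), MeasurableSet (u n ⁻¹' S) := by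
    intro n S
    have : u n ⁻¹' S = ⋃ c ∈ S ∩ range (u n), u n ⁻¹' {c} := by
      ext t
      simp only [mem_preimage, mem_iUnion, mem_inter_iff, mem_singleton_iff, exists_prop]
      constructor
      · intro h; exact ⟨u n t, ⟨h, mem_range_self t⟩, rfl⟩
      · rintro ⟨c, ⟨hc, -⟩, rfl⟩; exact hc
    rw [this]
    exact MeasurableSet.biUnion ((hurange n).mono inter_subset_right)
      (fun c _ => (hum n) (measurableSet_singleton c))
  set F : ℕ → ℝ → E := fun n => S.piecewise f (fun t => f (u n t)) with hF
  have hsm : ∀ n, StronglyMeasurable (F n) := by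
    intro n
    rw [stronglyMeasurable_iff_measurable_separable]
    constructor
    · intro A _
      rw [hF]
      simp only [Set.piecewise_preimage]
      apply MeasurableSet.union
      · exact ((hS.mono inter_subset_right).measurableSet)
      · exact (hpre n (f ⁻¹' A)).diff hS.measurableSet
    · have hsub : range (F n) ⊆ f '' S ∪ f '' range (u n) := by
        rintro _ ⟨t, rfl⟩
        by_cases htS : t ∈ S
        · left
          show S.piecewise f (fun t => f (u n t)) t ∈ f '' S
          rw [Set.piecewise_eq_of_mem _ _ _ htS]
          exact mem_image_of_mem f htS
        · right
          show S.piecewise f (fun t => f (u n t)) t ∈ f '' range (u n)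
          rw [Set.piecewise_eq_of_notMem _ _ _ htS]
          exact mem_image_of_mem f (mem_range_self t)
      exact IsSeparable.mono (((hS.image f).union ((hurange n).image f)).isSeparable) hsub
  have hconv : ∀ t ∈ Ico a b, Tendsto (fun n => F n t) atTop (𝓝 (f t)) := by
    intro t ht
    by_cases htS : t ∈ S
    · simp only [hF, Set.piecewise_eq_of_mem _ _ _ htS]
      exact tendsto_const_nhds
    simp only [hF, Set.piecewise_eq_of_notMem _ _ _ htS]
    apply (hf t ht htS).tendsto.comp
    rw [tendsto_nhdsWithin_iff]
    constructor
    · have hle : ∀ n : ℕ, t ≤ u n t := by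
        intro n
        have h1 : (t - a) * 2^n ≤ (⌈(t - a) * 2^n⌉ : ℝ) := Int.le_ceil _
        have h2 : (t - a) ≤ (⌈(t - a) * 2^n⌉ : ℝ) / 2^n := by
          rw [le_div_iff₀ (by positivity)]; exact h1
        simp only [hu]; linarith
      have hge : ∀ n : ℕ, u n t ≤ t + ((1:ℝ)/2)^n := by
        intro n
        have h1 : (⌈(t - a) * 2^n⌉ : ℝ) < (t - a) * 2^n + 1 := Int.ceil_lt_add_one _
        have h2 : (⌈(t - a) * 2^n⌉ : ℝ) / 2^n ≤ ((t - a) * 2^n + 1) / 2^n := by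
          exact div_le_div_of_nonneg_right h1.le (by positivity)
        have h3 : ((t - a) * 2^n + 1) / (2:ℝ)^n = (t - a) + ((1:ℝ)/2)^n := by
          rw [div_pow, one_pow]; field_simp
        simp only [hu]
        rw [h3] at h2
        linarith
      have h0 : Tendsto (fun n : ℕ => t + ((1:ℝ)/2)^n) atTop (𝓝 (t + 0)) :=
        tendsto_const_nhds.add
          (tendsto_pow_atTop_nhds_zero_of_lt_one (by norm_num) (by norm_num))
      rw [add_zero] at h0
      exact tendsto_of_tendsto_of_tendsto_of_le_of_le tendsto_const_nhds h0 hle hge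
    · exact Eventually.of_forall (fun n => by
        have h1 : (t - a) * 2^n ≤ (⌈(t - a) * 2^n⌉ : ℝ) := Int.le_ceil _
        have h2 : (t - a) ≤ (⌈(t - a) * 2^n⌉ : ℝ) / 2^n := by
          rw [le_div_iff₀ (by positivity)]; exact h1
        simp only [hu, mem_Ici]; linarith)
  apply aestronglyMeasurable_of_tendsto_ae atTop (fun n => (hsm n).aestronglyMeasurable)
  rw [ae_restrict_iff' measurableSet_Ico]
  exact Eventually.of_forall hconv

/-- integral characterization of the sweeping differential inclusion.
Here `C : [a,b) → Conv_H` is right continuous of bounded variation in the Hausdorff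
distance (encoded via `Closeds H`), `μ` is a positive finite Borel measure, `B ⊆ [a,b)`
is Borel with `μ(B) ≠ 0`, `v ∈ L¹(μ;H)`, and `y` is right continuous of bounded variation
with `y(t) ∈ C(t)` for all `t`. Then `−v(t) ∈ N_{C(t)}(y(t))` for `μ`-a.e. `t ∈ B` iff
`∫_B ⟪y − z, v⟫ dμ ≤ 0` for every `μ`-measurable selection `z` of `C` on `B` (for which
the integrand is integrable). -/
theorem stmt10 {H : Type*} [NormedAddCommGroup H] [InnerProductSpace ℝ H] [CompleteSpace H]
    (a b : ℝ) (hab : a < b)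
    (μ : Measure ℝ) [IsFiniteMeasure μ]
    (B : Set ℝ) (hBmeas : MeasurableSet B) (hBsub : B ⊆ Ico a b) (hBpos : μ B ≠ 0)
    (C : ℝ → Closeds H)
    (hCconv : ∀ t ∈ Ico a b, Convex ℝ (C t : Set H))
    (hCne : ∀ t ∈ Ico a b, (C t : Set H).Nonempty)
    (hCrc : ∀ t ∈ Ico a b, ContinuousWithinAt C (Ici t) t)
    (hCBV : eVariationOn C (Ico a b) ≠ ⊤)
    (v : ℝ → H) (hv : Integrable v μ)
    (y : ℝ → H)
    (hyrc : ∀ t ∈ Ico a b, ContinuousWithinAt y (Ici t) t)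
    (hyBV : eVariationOn y (Ico a b) ≠ ⊤)
    (hyC : ∀ t ∈ Ico a b, y t ∈ (C t : Set H)) :
    (∀ᵐ t ∂μ, t ∈ B → -v t ∈ normalCone (C t : Set H) (y t)) ↔
      (∀ z : ℝ → H, AEStronglyMeasurable z μ → (∀ t ∈ B, z t ∈ (C t : Set H)) →
        Integrable (fun t => ⟪y t - z t, v t⟫) (μ.restrict B) →
        ∫ t in B, ⟪y t - z t, v t⟫ ∂μ ≤ 0) := by
  classical
  constructor
  · -- easy direction
    intro hae z hzm hzsel hinteg
    apply integral_nonpos_of_ae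
    rw [Filter.EventuallyLE, ae_restrict_iff' hBmeas]
    filter_upwards [hae] with t h htB
    have hn : ⟪-v t, z t - y t⟫ ≤ 0 := h htB (z t) (hzsel t htB)
    have e : ⟪-v t, z t - y t⟫ = ⟪y t - z t, v t⟫ := by
      have h1 : z t - y t = -(y t - z t) := by abel
      rw [h1, inner_neg_neg, real_inner_comm]
    simpa [← e] using hn
  · -- hard direction
    intro hint
    -- the variation function of C, and its countable set of right-discontinuities
    have hVfin : ∀ t : ℝ, eVariationOn C (Ico a b ∩ Icc a t) ≠ ⊤ :=
      fun t => (lt_of_le_of_lt (eVariationOn.mono C inter_subset_left)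
        hCBV.lt_top).ne
    set V : ℝ → ℝ := fun t => (eVariationOn C (Ico a b ∩ Icc a t)).toReal with hV
    have hVmono : Monotone V := by
      intro r u hru
      exact ENNReal.toReal_mono (hVfin u)
        (eVariationOn.mono C (inter_subset_inter_right _ (Icc_subset_Icc_right hru)))
    set S : Set ℝ := {x | ¬ContinuousWithinAt V (Ioi x) x} with hSdef
    have hScount : S.Countable := by
      have h := (hVmono.monotoneOn univ).countable_not_continuousWithinAt_Ioi
      simp only [mem_univ, true_and, univ_inter] at h
      exact h
    -- right continuity of C in the Hausdorff metric off S
    have hCright : ∀ t ∈ Ico a b, t ∉ S →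
        Tendsto (fun s => hausdorffEdist (C s : Set H) (C t : Set H))
          (𝓝[Ici t] t) (𝓝 0) := by
      intro t ht htS
      rw [ENNReal.tendsto_nhds_zero]
      intro ε hε
      set ε' : ℝ := (min 1 ε).toReal with hε'
      have hε'pos : 0 < ε' := by
        rw [hε']
        apply ENNReal.toReal_pos
        · exact (lt_min one_pos hε).ne'
        · exact (lt_of_le_of_lt (min_le_left _ _) (by norm_num)).ne
      have hε'le : ENNReal.ofReal ε' ≤ ε := by
        rw [hε', ENNReal.ofReal_toReal (lt_of_le_of_lt (min_le_left _ _) (by norm_num)).ne]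
        exact min_le_right _ _
      have hVt : ContinuousWithinAt V (Ioi t) t := not_not.1 htS
      have hVev : ∀ᶠ s in 𝓝[Ioi t] t, V s - V t < ε' := by
        have := hVt.tendsto
        rw [Metric.tendsto_nhds] at this
        filter_upwards [this ε' hε'pos] with s hs
        rw [Real.dist_eq] at hs
        exact lt_of_le_of_lt (le_abs_self _) hs
      have hIci : Ici t = {t} ∪ Ioi t := by
        ext u; simp only [mem_Ici, mem_union, mem_singleton_iff, mem_Ioi]
        constructor
        · intro h; rcases eq_or_lt_of_le h with h' | h'
          · exact Or.inl h'.symm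
          · exact Or.inr h'
        · rintro (rfl | h); exacts [le_rfl, h.le]
      have key : ∀ s, t ≤ s → s ∈ Ico a b → V s - V t < ε' →
          hausdorffEdist (C s : Set H) (C t : Set H) ≤ ε := by
        intro s hts hs hVd
        have hsplit := eVariationOn.Icc_add_Icc C (a := a) (b := t) (c := s) ht.1 hts ht
        have hfin1 : eVariationOn C (Ico a b ∩ Icc a t) ≠ ⊤ := hVfin t
        have hfin2 : eVariationOn C (Ico a b ∩ Icc t s) ≠ ⊤ :=
          (lt_of_le_of_lt (eVariationOn.mono C inter_subset_left) hCBV.lt_top).ne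
        have hts' : eVariationOn C (Ico a b ∩ Icc t s)
            = eVariationOn C (Ico a b ∩ Icc a s) - eVariationOn C (Ico a b ∩ Icc a t) := by
          rw [← hsplit, ENNReal.add_sub_cancel_left hfin1]
        have hle' : eVariationOn C (Ico a b ∩ Icc a t)
            ≤ eVariationOn C (Ico a b ∩ Icc a s) := by
          rw [← hsplit]; exact le_self_add
        have hToReal : (eVariationOn C (Ico a b ∩ Icc t s)).toReal = V s - V t := by
          rw [hts', ENNReal.toReal_sub_of_le hle' (hVfin s)]
        have hle : eVariationOn C (Ico a b ∩ Icc t s) ≤ ENNReal.ofReal ε' := by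
          rw [← ENNReal.ofReal_toReal hfin2, hToReal]
          exact ENNReal.ofReal_le_ofReal (by linarith)
        have hedist : edist (C s) (C t) ≤ eVariationOn C (Ico a b ∩ Icc t s) :=
          eVariationOn.edist_le C ⟨hs, hts, le_rfl⟩ ⟨ht, le_rfl, hts⟩
        rw [EMetric.Closeds.edist_eq] at hedist
        exact le_trans (le_trans hedist hle) hε'le
      rw [hIci, nhdsWithin_union, eventually_sup]
      constructor
      · rw [nhdsWithin_singleton, eventually_pure]
        exact le_of_eq_of_le Metric.hausdorffEDist_self zero_le
      · filter_upwards [hVev, mem_nhdsWithin_of_mem_nhds (Iio_mem_nhds ht.2),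
          self_mem_nhdsWithin] with s hs1 hs2 hs3
        exact key s (le_of_lt hs3) ⟨le_trans ht.1 (le_of_lt hs3), hs2⟩ hs1
    -- right continuity of the moving projection off S, for a fixed point c
    have hrc : ∀ (c : H), ∀ t ∈ Ico a b, t ∉ S →
        ContinuousWithinAt (fun s => cproj (C s : Set H) (y s - c)) (Ici t) t := by
      intro c t ht htS
      have hKev : ∀ᶠ s in 𝓝[Ici t] t,
          ((C s : Set H).Nonempty ∧ IsClosed (C s : Set H) ∧ Convex ℝ (C s : Set H)) := by
        filter_upwards [mem_nhdsWithin_of_mem_nhds (Iio_mem_nhds ht.2),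
          self_mem_nhdsWithin] with s hs1 hs2
        have hs : s ∈ Ico a b := ⟨le_trans ht.1 hs2, hs1⟩
        exact ⟨hCne s hs, (C s).isClosed, hCconv s hs⟩
      have hx : Tendsto (fun s => y s - c) (𝓝[Ici t] t) (𝓝 (y t - c)) :=
        Filter.Tendsto.sub (hyrc t ht) tendsto_const_nhds
      exact cproj_tendsto hKev (hCne t ht) (C t).isClosed (hCconv t ht)
        (hCright t ht htS) hx
    have hres : μ.restrict B ≤ μ.restrict (Ico a b) := Measure.restrict_mono hBsub le_rfl
    have hPc : ∀ c : H, AEStronglyMeasurable (fun t => cproj (C t : Set H) (y t - c))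
        (μ.restrict B) :=
      fun c => (aesm_of_rightCont hScount _ (hrc c) μ).mono_measure hres
    have hyB : AEStronglyMeasurable y (μ.restrict B) :=
      (aesm_of_rightCont hScount y (fun t ht _ => hyrc t ht) μ).mono_measure hres
    obtain ⟨v', hv'sm, hvv'⟩ := hv.1
    set s : ℕ → SimpleFunc ℝ H := hv'sm.approx with hs
    have hPn : ∀ n, AEStronglyMeasurable (fun t => cproj (C t : Set H) (y t - s n t))
        (μ.restrict B) := by
      intro n
      have heq : (fun t => cproj (C t : Set H) (y t - s n t))
          = fun t => ∑ c ∈ (s n).range,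
              ((s n) ⁻¹' {c}).indicator (fun u => cproj (C u : Set H) (y u - c)) t := by
        funext t
        rw [Finset.sum_eq_single_of_mem (s n t) (SimpleFunc.mem_range_self _ t)]
        · rw [Set.indicator_of_mem (show t ∈ (s n) ⁻¹' {s n t} from rfl)]
        · intro c hc hnec
          apply Set.indicator_of_notMem
          intro hmem
          apply hnec
          have h' : s n t = c := by simpa using hmem
          exact h'.symm
      rw [heq]
      apply Finset.aestronglyMeasurable_fun_sum
      intro c _
      exact (hPc c).indicator ((s n).measurableSet_fiber c)
    have hP' : AEStronglyMeasurable (fun t => cproj (C t : Set H) (y t - v' t))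
        (μ.restrict B) := by
      apply aestronglyMeasurable_of_tendsto_ae atTop hPn
      rw [ae_restrict_iff' hBmeas]
      refine Eventually.of_forall (fun t ht => ?_)
      have htI := hBsub ht
      have hlim : Tendsto (fun n => s n t) atTop (𝓝 (v' t)) := hv'sm.tendsto_approx t
      rw [tendsto_iff_dist_tendsto_zero]
      apply squeeze_zero (fun n => dist_nonneg) (g := fun n => dist (s n t) (v' t))
      · intro n
        rw [dist_eq_norm]
        calc ‖cproj (C t : Set H) (y t - s n t) - cproj (C t : Set H) (y t - v' t)‖
            ≤ ‖(y t - s n t) - (y t - v' t)‖ :=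
              cproj_lipschitz (hCne t htI) (C t).isClosed (hCconv t htI) _ _
          _ = dist (s n t) (v' t) := by
              rw [dist_eq_norm, ← norm_neg (s n t - v' t)]; congr 1; abel
      · rwa [← tendsto_iff_dist_tendsto_zero]
    set P : ℝ → H := fun t => cproj (C t : Set H) (y t - v t) with hPdef
    have hPB : AEStronglyMeasurable P (μ.restrict B) := by
      refine hP'.congr ?_
      filter_upwards [ae_restrict_of_ae hvv'] with t h
      simp only [hPdef]
      rw [h]
    set θ : ℝ → ℝ := fun t => (max 1 ‖y t - P t‖)⁻¹ with hθdef
    have hmaxpos : ∀ t, (0:ℝ) < max 1 ‖y t - P t‖ :=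
      fun t => lt_of_lt_of_le one_pos (le_max_left _ _)
    have hθpos : ∀ t, 0 < θ t := fun t => inv_pos.2 (hmaxpos t)
    have hθle1 : ∀ t, θ t ≤ 1 := fun t => inv_le_one_of_one_le₀ (le_max_left _ _)
    have hθnorm : ∀ t, θ t * ‖y t - P t‖ ≤ 1 := by
      intro t
      calc θ t * ‖y t - P t‖ ≤ θ t * max 1 ‖y t - P t‖ :=
            mul_le_mul_of_nonneg_left (le_max_right _ _) (hθpos t).le
        _ = 1 := inv_mul_cancel₀ (hmaxpos t).ne'
    set g : ℝ → H := fun t => y t + θ t • (P t - y t) with hgdef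
    have hyg : ∀ t, y t - g t = θ t • (y t - P t) := by
      intro t; simp only [hgdef, smul_sub]; abel
    have hspec : ∀ t ∈ Ico a b, P t ∈ (C t : Set H) ∧
        ∀ w ∈ (C t : Set H), ⟪(y t - v t) - P t, w - P t⟫ ≤ 0 :=
      fun t ht => cproj_spec (hCne t ht) (C t).isClosed (hCconv t ht) _
    have hkey1 : ∀ t ∈ Ico a b, ‖y t - P t‖^2 ≤ ⟪y t - P t, v t⟫ := by
      intro t ht
      have h := (hspec t ht).2 (y t) (hyC t ht)
      have e : (y t - v t) - P t = (y t - P t) - v t := by abel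
      rw [e, inner_sub_left, real_inner_self_eq_norm_sq] at h
      have := real_inner_comm (v t) (y t - P t)
      linarith
    have hgC : ∀ t ∈ Ico a b, g t ∈ (C t : Set H) := by
      intro t ht
      have he : g t = (1 - θ t) • y t + θ t • P t := by
        simp only [hgdef]; rw [sub_smul, one_smul, smul_sub]; abel
      rw [he]
      exact (hCconv t ht) (hyC t ht) (hspec t ht).1
        (by linarith [hθle1 t]) (hθpos t).le (by ring)
    have hθB : AEStronglyMeasurable θ (μ.restrict B) := by
      have h1 : AEStronglyMeasurable (fun t => ‖y t - P t‖) (μ.restrict B) :=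
        (hyB.sub hPB).norm
      have h2 : Continuous fun r : ℝ => (max 1 r)⁻¹ :=
        Continuous.inv₀ (continuous_const.max continuous_id)
          (fun x => (lt_of_lt_of_le one_pos (le_max_left _ _)).ne')
      exact h2.comp_aestronglyMeasurable h1
    have hgB : AEStronglyMeasurable g (μ.restrict B) := hyB.add (hθB.smul (hPB.sub hyB))
    obtain ⟨G, hGsm, hgG⟩ := hgB
    set N : Set ℝ := toMeasurable (μ.restrict B) {t | g t ≠ G t} with hNdef
    have hNmeas : MeasurableSet N := measurableSet_toMeasurable _ _
    have hbadN : {t | g t ≠ G t} ⊆ N := subset_toMeasurable _ _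
    have hNnull : μ.restrict B N = 0 := by
      rw [hNdef, measure_toMeasurable]
      exact hgG
    have hNB : μ (N ∩ B) = 0 := by rwa [Measure.restrict_apply hNmeas] at hNnull
    set z : ℝ → H := fun t => if t ∈ B \ N then G t else if t ∈ B then y t else 0 with hzdef
    have hzAESM : AEStronglyMeasurable z μ := by
      have hW : StronglyMeasurable ((B \ N).piecewise G (fun _ => (0:H))) :=
        hGsm.piecewise (hBmeas.diff hNmeas) stronglyMeasurable_const
      refine hW.aestronglyMeasurable.congr ?_
      have hae : ∀ᵐ t ∂μ, t ∉ N ∩ B := by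
        rw [ae_iff]
        have he : {t : ℝ | ¬ t ∉ N ∩ B} = N ∩ B := by ext t; simp
        rw [he]; exact hNB
      filter_upwards [hae] with t ht
      by_cases h1 : t ∈ B \ N
      · rw [Set.piecewise_eq_of_mem _ _ _ h1]
        simp only [hzdef]
        rw [if_pos h1]
      · by_cases h2 : t ∈ B
        · exfalso
          exact ht ⟨by_contra fun hN' => h1 ⟨h2, hN'⟩, h2⟩
        · rw [Set.piecewise_eq_of_notMem _ _ _ h1]
          simp only [hzdef]
          rw [if_neg h1, if_neg h2]
    have hgval : ∀ t, t ∈ B \ N → z t = g t := by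
      intro t h1
      have hg' : g t = G t := by_contra fun h => h1.2 (hbadN h)
      simp only [hzdef, if_pos h1, ← hg']
    have hzsel : ∀ t ∈ B, z t ∈ (C t : Set H) := by
      intro t htB
      by_cases h1 : t ∈ B \ N
      · rw [hgval t h1]; exact hgC t (hBsub htB)
      · have : z t = y t := by simp only [hzdef, if_neg h1, if_pos htB]
        rw [this]; exact hyC t (hBsub htB)
    have hyz : ∀ t ∈ B, y t - z t = if t ∈ B \ N then θ t • (y t - P t) else 0 := by
      intro t htB
      by_cases h1 : t ∈ B \ N
      · rw [if_pos h1, hgval t h1]; exact hyg t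
      · rw [if_neg h1]
        have : z t = y t := by simp only [hzdef, if_neg h1, if_pos htB]
        rw [this, sub_self]
    have hval : ∀ t ∈ B, ⟪y t - z t, v t⟫
        = if t ∈ B \ N then θ t * ⟪y t - P t, v t⟫ else 0 := by
      intro t htB
      rw [hyz t htB]
      by_cases h1 : t ∈ B \ N
      · rw [if_pos h1, if_pos h1, real_inner_smul_left]
      · rw [if_neg h1, if_neg h1, inner_zero_left]
    have hnormyz : ∀ t ∈ B, ‖y t - z t‖ ≤ 1 := by
      intro t htB
      rw [hyz t htB]
      by_cases h1 : t ∈ B \ N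
      · rw [if_pos h1, norm_smul, Real.norm_eq_abs, abs_of_pos (hθpos t)]
        exact hθnorm t
      · rw [if_neg h1, norm_zero]; norm_num
    have hinteg : Integrable (fun t => ⟪y t - z t, v t⟫) (μ.restrict B) := by
      refine Integrable.mono (hv.restrict.norm) ?_ ?_
      · exact (hyB.sub hzAESM.restrict).inner (hv.1.restrict)
      · rw [ae_restrict_iff' hBmeas]
        refine Eventually.of_forall (fun t htB => ?_)
        rw [norm_norm, Real.norm_eq_abs]
        calc |⟪y t - z t, v t⟫| ≤ ‖y t - z t‖ * ‖v t‖ := abs_real_inner_le_norm _ _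
          _ ≤ 1 * ‖v t‖ := mul_le_mul_of_nonneg_right (hnormyz t htB) (norm_nonneg _)
          _ = ‖v t‖ := one_mul _
    have hint0 : ∫ t in B, ⟪y t - z t, v t⟫ ∂μ ≤ 0 := hint z hzAESM hzsel hinteg
    have hnnae : 0 ≤ᵐ[μ.restrict B] (fun t => ⟪y t - z t, v t⟫) := by
      rw [Filter.EventuallyLE, ae_restrict_iff' hBmeas]
      refine Eventually.of_forall (fun t htB => ?_)
      show (0:ℝ) ≤ ⟪y t - z t, v t⟫
      rw [hval t htB]
      by_cases h1 : t ∈ B \ N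
      · rw [if_pos h1]
        have hk := hkey1 t (hBsub htB)
        exact mul_nonneg (hθpos t).le (le_trans (sq_nonneg _) hk)
      · rw [if_neg h1]
    have hez : ∫ t in B, ⟪y t - z t, v t⟫ ∂μ = 0 :=
      le_antisymm hint0 (integral_nonneg_of_ae hnnae)
    have hzero : (fun t => ⟪y t - z t, v t⟫) =ᵐ[μ.restrict B] 0 :=
      (integral_eq_zero_iff_of_nonneg_ae hnnae hinteg).1 hez
    have hNae : ∀ᵐ t ∂μ.restrict B, t ∉ N := by
      rw [ae_iff]
      have he : {t : ℝ | ¬ t ∉ N} = N := by ext t; simp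
      rw [he]; exact hNnull
    have final : ∀ᵐ t ∂μ.restrict B, -v t ∈ normalCone (C t : Set H) (y t) := by
      filter_upwards [hzero, hNae, ae_restrict_mem hBmeas] with t hz0 htN htB
      have htI := hBsub htB
      have h1 : t ∈ B \ N := ⟨htB, htN⟩
      have h2 : θ t * ⟪y t - P t, v t⟫ = 0 := by
        have hv2 := hval t htB
        rw [if_pos h1] at hv2
        rw [← hv2]
        exact hz0
      have h3 : ⟪y t - P t, v t⟫ = 0 := (mul_eq_zero.1 h2).resolve_left (hθpos t).ne'
      have h4 : ‖y t - P t‖^2 ≤ 0 := by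
        have := hkey1 t htI
        linarith
      have h5 : y t = P t := by
        have h6 : ‖y t - P t‖ = 0 := by nlinarith [norm_nonneg (y t - P t)]
        rwa [norm_sub_eq_zero_iff] at h6
      intro w hw
      have h6 := (hspec t htI).2 w hw
      rw [← h5] at h6
      have e : y t - v t - y t = -v t := by abel
      rwa [e] at h6
    exact (ae_restrict_iff' hBmeas).1 final
end

section
/- (Contraction property for sweeping processes.) Let H be a real Hilbert space, a < b, C : [a,b) → Conv_H right continuous of bounded variation, and let y₁, y₂ be solutions of the sweeping process driven by C with initial conditions y_{0,1}, y_{0,2} ∈ C(a) respectively. Then t ↦ ‖y₁(t) − y₂(t)‖² is nonincreasing on [a,b). -/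
open Set Filter Topology MeasureTheory TopologicalSpace
open scoped RealInnerProductSpace ENNReal

/-- `y` is a solution on `[a,b)` of the sweeping process driven by `C` with initial
condition `y₀`. -/
def SweepingSolution {H : Type*} [NormedAddCommGroup H] [InnerProductSpace ℝ H]
    (a b : ℝ) (C : ℝ → Closeds H) (y₀ : H) (y : ℝ → H) : Prop :=
  (∀ t ∈ Ico a b, ContinuousWithinAt y (Ici t) t) ∧
  eVariationOn y (Ico a b) ≠ ⊤ ∧
  ∃ μ : Measure ℝ, IsFiniteMeasure μ ∧ ∃ v : ℝ → H,
    Integrable v μ ∧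
    (∀ t ∈ Ico a b, y t ∈ (C t : Set H)) ∧
    (∀ c d : ℝ, a ≤ c → c ≤ d → d < b → y d - y c = ∫ t in Ioc c d, v t ∂μ) ∧
    (∀ᵐ t ∂μ, t ∈ Ioo a b → -v t ∈ normalCone (C t : Set H) (y t)) ∧
    y a = y₀

section Helpers
variable {H : Type*} [NormedAddCommGroup H]

lemma sm_comp_countable {g : ℝ → ℝ} (hg : Measurable g)
    (hcr : (Set.range g).Countable) (z : ℝ → H) :
    StronglyMeasurable (fun r => z (g r)) := by
  borelize H
  rw [stronglyMeasurable_iff_measurable_separable]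
  constructor
  · intro S _
    have hEq : (fun r => z (g r)) ⁻¹' S = ⋃ v ∈ (Set.range g ∩ z ⁻¹' S), g ⁻¹' {v} := by
      ext r
      simp only [Set.mem_preimage, Set.mem_iUnion, Set.mem_inter_iff, Set.mem_range,
        Set.mem_singleton_iff, exists_prop]
      constructor
      · intro h; exact ⟨g r, ⟨⟨r, rfl⟩, h⟩, rfl⟩
      · rintro ⟨v, ⟨_, hv⟩, rfl⟩; exact hv
    rw [hEq]
    exact MeasurableSet.biUnion (hcr.mono Set.inter_subset_left)
      (fun v _ => hg (measurableSet_singleton v))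
  · have : Set.range (fun r => z (g r)) ⊆ z '' (Set.range g) := by
      rintro x ⟨r, rfl⟩; exact ⟨g r, ⟨r, rfl⟩, rfl⟩
    exact ((hcr.image z).isSeparable).mono this

lemma aesm_of_rightCont_s13 {f : ℝ → H} {a b c d : ℝ} (hcd : Ioc c d ⊆ Ico a b)
    (hf : ∀ r ∈ Ico a b, ContinuousWithinAt f (Ici r) r) (μ : Measure ℝ) :
    AEStronglyMeasurable f (μ.restrict (Ioc c d)) := by
  set g : ℕ → ℝ → ℝ := fun n r =>
    if ((⌈r * 2 ^ n⌉ : ℝ) / 2 ^ n) < b then ((⌈r * 2 ^ n⌉ : ℝ) / 2 ^ n) else c with hgdef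
  have hgm : ∀ n, Measurable (g n) := by
    intro n
    have h1 : Measurable fun r : ℝ => ((⌈r * 2 ^ n⌉ : ℝ) / 2 ^ n) :=
      (((measurable_of_countable (Int.cast : ℤ → ℝ)).comp (Int.measurable_ceil.comp
        (measurable_id.mul_const _))).div_const _)
    exact Measurable.ite (h1 measurableSet_Iio) h1 measurable_const
  have hgc : ∀ n, (Set.range (g n)).Countable := by
    intro n
    have : Set.range (g n) ⊆ (Set.range fun k : ℤ => ((k : ℝ) / 2 ^ n)) ∪ {c} := by
      rintro x ⟨r, rfl⟩
      simp only [hgdef]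
      split_ifs
      · exact Or.inl ⟨⌈r * 2 ^ n⌉, rfl⟩
      · exact Or.inr rfl
    exact ((Set.countable_range _).union (Set.countable_singleton c)).mono this
  apply aestronglyMeasurable_of_tendsto_ae (atTop : Filter ℕ)
    (f := fun n r => f (g n r))
    (fun n => ((sm_comp_countable (hgm n) (hgc n) f)).aestronglyMeasurable)
  rw [ae_restrict_iff' measurableSet_Ioc]
  refine ae_of_all _ fun r hr => ?_
  have hrm : r ∈ Ico a b := hcd hr
  have hpow : Tendsto (fun n : ℕ => ((2 : ℝ) ^ n)⁻¹) atTop (𝓝 0) := by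
    simpa [one_div, inv_pow] using
      tendsto_pow_atTop_nhds_zero_of_lt_one (by norm_num : (0:ℝ) ≤ 1/2) (by norm_num)
  have hev : ∀ᶠ n in atTop, ((2 : ℝ) ^ n)⁻¹ < b - r :=
    hpow.eventually_lt_const (by linarith [hrm.2])
  have hkey : ∀ᶠ n in atTop, r ≤ g n r ∧ g n r ≤ r + ((2:ℝ) ^ n)⁻¹ := by
    filter_upwards [hev] with n hn
    have h2 : (0:ℝ) < 2 ^ n := by positivity
    have hle : r ≤ ((⌈r * 2 ^ n⌉ : ℝ) / 2 ^ n) := by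
      rw [le_div_iff₀ h2]; exact Int.le_ceil _
    have hlt : ((⌈r * 2 ^ n⌉ : ℝ) / 2 ^ n) < r + ((2:ℝ) ^ n)⁻¹ := by
      rw [div_lt_iff₀ h2]
      have := Int.ceil_lt_add_one (r * 2 ^ n)
      calc ((⌈r * 2 ^ n⌉ : ℝ)) < r * 2 ^ n + 1 := this
        _ = (r + ((2:ℝ) ^ n)⁻¹) * 2 ^ n := by field_simp
    have hcond : ((⌈r * 2 ^ n⌉ : ℝ) / 2 ^ n) < b := by linarith
    simp only [hgdef, if_pos hcond]
    exact ⟨hle, le_of_lt hlt⟩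
  have htend : Tendsto (fun n => g n r) atTop (𝓝[Ici r] r) := by
    rw [tendsto_nhdsWithin_iff]
    constructor
    · apply tendsto_of_tendsto_of_tendsto_of_le_of_le' tendsto_const_nhds
        (by simpa using tendsto_const_nhds.add hpow)
      · filter_upwards [hkey] with n hn using hn.1
      · filter_upwards [hkey] with n hn using hn.2
    · filter_upwards [hkey] with n hn using hn.1
  exact (hf r hrm).tendsto.comp htend

end Helpers

/-- contraction: if `y₁`, `y₂` solve the sweeping process driven by the same
right-continuous BV moving set `C` with initial conditions `y₀₁, y₀₂ ∈ C(a)`, then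
`t ↦ ‖y₁(t) − y₂(t)‖²` is nonincreasing on `[a,b)`. -/
theorem stmt13 {H : Type*} [NormedAddCommGroup H] [InnerProductSpace ℝ H] [CompleteSpace H]
    (a b : ℝ) (hab : a < b)
    (C : ℝ → Closeds H)
    (hCconv : ∀ t ∈ Ico a b, Convex ℝ (C t : Set H))
    (hCne : ∀ t ∈ Ico a b, (C t : Set H).Nonempty)
    (hCrc : ∀ t ∈ Ico a b, ContinuousWithinAt C (Ici t) t)
    (hCBV : eVariationOn C (Ico a b) ≠ ⊤)
    (y₀₁ y₀₂ : H) (hy₀₁ : y₀₁ ∈ (C a : Set H)) (hy₀₂ : y₀₂ ∈ (C a : Set H))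
    (y₁ y₂ : ℝ → H)
    (h₁ : SweepingSolution a b C y₀₁ y₁) (h₂ : SweepingSolution a b C y₀₂ y₂) :
    AntitoneOn (fun t => ‖y₁ t - y₂ t‖ ^ 2) (Ico a b) := by
  obtain ⟨hc₁, hbv₁, μ₁, hfin₁, v₁, hint₁, hmem₁, hrep₁, hnc₁, hinit₁⟩ := h₁
  obtain ⟨hc₂, hbv₂, μ₂, hfin₂, v₂, hint₂, hmem₂, hrep₂, hnc₂, hinit₂⟩ := h₂
  set z : ℝ → H := fun r => y₁ r - y₂ r with hz
  have hzc : ∀ r ∈ Ico a b, ContinuousWithinAt z (Ici r) r :=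
    fun r hr => (hc₁ r hr).sub (hc₂ r hr)
  have ha : a ∈ Ico a b := ⟨le_refl a, hab⟩
  have hvar : ∀ (y : ℝ → H), eVariationOn y (Ico a b) ≠ ⊤ →
      ∀ r ∈ Ico a b, ‖y r - y a‖ ≤ (eVariationOn y (Ico a b)).toReal := by
    intro y hy r hr
    have h1 : edist (y r) (y a) ≤ eVariationOn y (Ico a b) := eVariationOn.edist_le y hr ha
    have h2 := ENNReal.toReal_mono hy h1
    rwa [edist_dist, ENNReal.toReal_ofReal dist_nonneg, dist_eq_norm] at h2
  set M : ℝ := (eVariationOn y₁ (Ico a b)).toReal + (eVariationOn y₂ (Ico a b)).toReal + ‖z a‖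
    with hM
  have hMz : ∀ r ∈ Ico a b, ‖z r‖ ≤ M := by
    intro r hr
    have e : z r = ((y₁ r - y₁ a) - (y₂ r - y₂ a)) + z a := by simp only [hz]; abel
    calc ‖z r‖ ≤ ‖(y₁ r - y₁ a) - (y₂ r - y₂ a)‖ + ‖z a‖ := by rw [e]; exact norm_add_le _ _
      _ ≤ (‖y₁ r - y₁ a‖ + ‖y₂ r - y₂ a‖) + ‖z a‖ := by
          have := norm_sub_le (y₁ r - y₁ a) (y₂ r - y₂ a); linarith
      _ ≤ M := by
          have h1 := hvar y₁ hbv₁ r hr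
          have h2 := hvar y₂ hbv₂ r hr
          rw [hM]; linarith
  -- normal cone consequences
  have hnc₁' : ∀ᵐ r ∂μ₁, r ∈ Ioo a b → ⟪z r, v₁ r⟫ ≤ 0 := by
    filter_upwards [hnc₁] with r h hr
    have hy2 : y₂ r ∈ (C r : Set H) := hmem₂ r ⟨hr.1.le, hr.2⟩
    have h2 := h hr (y₂ r) hy2
    rw [inner_neg_left, inner_sub_right] at h2
    simp only [hz]
    rw [real_inner_comm, inner_sub_right]
    linarith
  have hnc₂' : ∀ᵐ r ∂μ₂, r ∈ Ioo a b → 0 ≤ ⟪z r, v₂ r⟫ := by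
    filter_upwards [hnc₂] with r h hr
    have hy1 : y₁ r ∈ (C r : Set H) := hmem₁ r ⟨hr.1.le, hr.2⟩
    have h2 := h hr (y₁ r) hy1
    rw [inner_neg_left, inner_sub_right] at h2
    simp only [hz]
    rw [real_inner_comm, inner_sub_right]
    linarith
  have sqid : ∀ u w : H, ‖u‖^2 - ‖w‖^2 ≤ 2 * ⟪u, u - w⟫ := by
    intro u w
    have h1 : (0:ℝ) ≤ ‖u - w‖^2 := sq_nonneg _
    have h2 : ‖u - w‖ ^ 2 = ‖u‖ ^ 2 - 2 * ⟪u, w⟫ + ‖w‖ ^ 2 := norm_sub_sq_real u w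
    have h3 : ⟪u, u - w⟫ = ‖u‖^2 - ⟪u, w⟫ := by
      rw [inner_sub_right, real_inner_self_eq_norm_sq]
    linarith
  -- main argument
  intro s hs t ht hst
  rcases eq_or_lt_of_le hst with rfl | hst'
  · exact le_refl _
  simp only
  have hδ : (0:ℝ) < t - s := sub_pos.mpr hst'
  have hn1 : ∀ n : ℕ, (0:ℝ) < (n:ℝ) + 1 := fun n => by positivity
  set p : ℕ → ℕ → ℝ := fun n k => s + (t - s) * (k:ℝ) / ((n:ℝ)+1) with hpdef
  set τ : ℕ → ℝ → ℝ :=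
    fun n r => s + (t - s) * ((⌈(r - s) * ((n:ℝ)+1) / (t - s)⌉ : ℤ) : ℝ) / ((n:ℝ)+1) with hτdef
  have hp0 : ∀ n, p n 0 = s := by intro n; simp [hpdef]
  have hplast : ∀ n, p n (n+1) = t := by
    intro n; simp only [hpdef]; push_cast; field_simp; ring
  have hps : ∀ n k, s ≤ p n k := by
    intro n k; simp only [hpdef]
    have : (0:ℝ) ≤ (t - s) * (k:ℝ) / ((n:ℝ)+1) := by positivity
    linarith
  have hpmono : ∀ n k, p n k ≤ p n (k+1) := by
    intro n k; simp only [hpdef]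
    have hk : (k:ℝ) ≤ ((k+1:ℕ):ℝ) := by push_cast; linarith
    gcongr
  have hpt : ∀ n k, k ≤ n + 1 → p n k ≤ t := by
    intro n k hk; simp only [hpdef]
    have hk' : (k:ℝ) ≤ (n:ℝ) + 1 := by
      have := (Nat.cast_le (α := ℝ)).mpr hk; push_cast at this; linarith
    rw [← sub_nonneg]
    have : t - (s + (t - s) * (k:ℝ) / ((n:ℝ)+1)) = (t - s) * (((n:ℝ)+1) - (k:ℝ)) / ((n:ℝ)+1) := by
      field_simp; ring
    rw [this]
    have : (0:ℝ) ≤ ((n:ℝ)+1) - (k:ℝ) := by linarith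
    positivity
  have hτ_piece : ∀ n k : ℕ, ∀ r ∈ Ioc (p n k) (p n (k+1)), τ n r = p n (k+1) := by
    intro n k r hr
    have h1 : (k:ℝ) < (r - s) * ((n:ℝ)+1) / (t - s) := by
      rw [lt_div_iff₀ hδ]
      have hd := hr.1
      simp only [hpdef] at hd
      have h2 : (t - s) * (k:ℝ) / ((n:ℝ)+1) < r - s := by linarith
      rw [div_lt_iff₀ (hn1 n)] at h2
      nlinarith
    have h2 : (r - s) * ((n:ℝ)+1) / (t - s) ≤ (k:ℝ) + 1 := by
      rw [div_le_iff₀ hδ]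
      have hd := hr.2
      simp only [hpdef] at hd
      have h3 : r - s ≤ (t - s) * ((k:ℝ)+1) / ((n:ℝ)+1) := by push_cast at hd; linarith
      rw [le_div_iff₀ (hn1 n)] at h3
      nlinarith
    have hceil : ⌈(r - s) * ((n:ℝ)+1) / (t - s)⌉ = (k:ℤ) + 1 := by
      rw [Int.ceil_eq_iff]
      constructor <;> push_cast <;> linarith
    simp only [hτdef, hpdef, hceil]
    push_cast; ring
  have hτ_bounds : ∀ n : ℕ, ∀ r ∈ Ioc s t,
      r ≤ τ n r ∧ τ n r ≤ r + (t - s)/((n:ℝ)+1) ∧ τ n r ∈ Ioc s t := by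
    intro n r hr
    set q : ℝ := (r - s) * ((n:ℝ)+1) / (t - s) with hq
    have hq1 : q ≤ (⌈q⌉ : ℝ) := Int.le_ceil q
    have hq2 : ((⌈q⌉ : ℤ) : ℝ) < q + 1 := Int.ceil_lt_add_one q
    have hqr : (t - s) * q / ((n:ℝ)+1) = r - s := by
      rw [hq]; field_simp
    have hqN : q ≤ (n:ℝ) + 1 := by
      rw [hq, div_le_iff₀ hδ]
      nlinarith [hr.2]
    have hceil_le : ((⌈q⌉ : ℤ) : ℝ) ≤ (n:ℝ) + 1 := by
      have : ⌈q⌉ ≤ (n:ℤ) + 1 := Int.ceil_le.mpr (by push_cast; exact hqN)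
      exact_mod_cast this
    have he : τ n r = s + (t - s) * ((⌈q⌉ : ℤ) : ℝ) / ((n:ℝ)+1) := rfl
    have hX1 : r - s ≤ (t - s) * ((⌈q⌉ : ℤ) : ℝ) / ((n:ℝ)+1) := by
      rw [← hqr]
      have h := mul_le_mul_of_nonneg_left hq1 hδ.le
      exact (div_le_div_iff_of_pos_right (hn1 n)).mpr h
    have hX2 : (t - s) * ((⌈q⌉ : ℤ) : ℝ) / ((n:ℝ)+1) ≤ (r - s) + (t - s)/((n:ℝ)+1) := by
      have h := mul_le_mul_of_nonneg_left hq2.le hδ.le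
      have h' := (div_le_div_iff_of_pos_right (hn1 n)).mpr h
      calc (t - s) * ((⌈q⌉ : ℤ) : ℝ) / ((n:ℝ)+1) ≤ (t - s) * (q + 1) / ((n:ℝ)+1) := h'
        _ = (t - s) * q / ((n:ℝ)+1) + (t - s)/((n:ℝ)+1) := by ring
        _ = (r - s) + (t - s)/((n:ℝ)+1) := by rw [hqr]
    have hX3 : (t - s) * ((⌈q⌉ : ℤ) : ℝ) / ((n:ℝ)+1) ≤ t - s := by
      have h := mul_le_mul_of_nonneg_left hceil_le hδ.le
      have h' := (div_le_div_iff_of_pos_right (hn1 n)).mpr h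
      calc (t - s) * ((⌈q⌉ : ℤ) : ℝ) / ((n:ℝ)+1) ≤ (t - s) * ((n:ℝ)+1) / ((n:ℝ)+1) := h'
        _ = t - s := by field_simp
    refine ⟨by rw [he]; linarith, by rw [he]; linarith, ?_, by rw [he]; linarith⟩
    rw [he]
    have := hr.1
    linarith
  -- subsets
  have hsub : Ioc s t ⊆ Ico a b :=
    fun r hr => ⟨hs.1.trans hr.1.le, lt_of_le_of_lt hr.2 ht.2⟩
  have hsub' : Ioc s t ⊆ Ioo a b :=
    fun r hr => ⟨lt_of_le_of_lt hs.1 hr.1, lt_of_le_of_lt hr.2 ht.2⟩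
  -- measurability of τ
  have hτm : ∀ n, Measurable (τ n) := by
    intro n
    have h1 : Measurable fun r : ℝ => (r - s) * ((n:ℝ)+1) / (t - s) :=
      ((measurable_id.sub_const s).mul_const _).div_const _
    have h2 : Measurable fun r : ℝ => ((⌈(r - s) * ((n:ℝ)+1) / (t - s)⌉ : ℤ) : ℝ) :=
      (measurable_of_countable (Int.cast : ℤ → ℝ)).comp (Int.measurable_ceil.comp h1)
    exact (((h2.const_mul (t - s)).div_const _).const_add s)
  have hτc : ∀ n, (Set.range (τ n)).Countable := by
    intro n
    have : Set.range (τ n) ⊆ Set.range (fun k : ℤ => s + (t - s) * (k:ℝ) / ((n:ℝ)+1)) := by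
      rintro x ⟨r, rfl⟩
      exact ⟨⌈(r - s) * ((n:ℝ)+1) / (t - s)⌉, rfl⟩
    exact (Set.countable_range _).mono this
  have hzmτ : ∀ n, StronglyMeasurable (fun r => z (τ n r)) :=
    fun n => sm_comp_countable (hτm n) (hτc n) z
  have hzm₁ : AEStronglyMeasurable z (μ₁.restrict (Ioc s t)) := aesm_of_rightCont_s13 hsub hzc μ₁
  have hzm₂ : AEStronglyMeasurable z (μ₂.restrict (Ioc s t)) := aesm_of_rightCont_s13 hsub hzc μ₂
  -- bounds on z ∘ τ
  have hτM : ∀ n, ∀ r ∈ Ioc s t, ‖z (τ n r)‖ ≤ M := by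
    intro n r hr
    exact hMz _ (hsub ((hτ_bounds n r hr).2.2))
  -- integrability
  have hI₁ : ∀ n, IntegrableOn (fun r => ⟪z (τ n r), v₁ r⟫) (Ioc s t) μ₁ := by
    intro n
    apply Integrable.mono' ((hint₁.norm.const_mul M).integrableOn)
      ((hzmτ n).aestronglyMeasurable.inner hint₁.1.restrict)
    rw [ae_restrict_iff' measurableSet_Ioc]
    refine ae_of_all _ fun r hr => ?_
    calc ‖⟪z (τ n r), v₁ r⟫‖ ≤ ‖z (τ n r)‖ * ‖v₁ r‖ := norm_inner_le_norm _ _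
      _ ≤ M * ‖v₁ r‖ := by
          apply mul_le_mul_of_nonneg_right (hτM n r hr) (norm_nonneg _)
  have hI₂ : ∀ n, IntegrableOn (fun r => ⟪z (τ n r), v₂ r⟫) (Ioc s t) μ₂ := by
    intro n
    apply Integrable.mono' ((hint₂.norm.const_mul M).integrableOn)
      ((hzmτ n).aestronglyMeasurable.inner hint₂.1.restrict)
    rw [ae_restrict_iff' measurableSet_Ioc]
    refine ae_of_all _ fun r hr => ?_
    calc ‖⟪z (τ n r), v₂ r⟫‖ ≤ ‖z (τ n r)‖ * ‖v₂ r‖ := norm_inner_le_norm _ _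
      _ ≤ M * ‖v₂ r‖ := by
          apply mul_le_mul_of_nonneg_right (hτM n r hr) (norm_nonneg _)
  have hE₁ : ∀ n, IntegrableOn (fun r => ‖z (τ n r) - z r‖ * ‖v₁ r‖) (Ioc s t) μ₁ := by
    intro n
    apply Integrable.mono' ((hint₁.norm.const_mul (2*M)).integrableOn)
      (((hzmτ n).aestronglyMeasurable.sub hzm₁).norm.mul hint₁.1.restrict.norm)
    rw [ae_restrict_iff' measurableSet_Ioc]
    refine ae_of_all _ fun r hr => ?_
    have h1 : ‖z (τ n r) - z r‖ ≤ 2 * M := by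
      have := hτM n r hr
      have := hMz r (hsub hr)
      have := norm_sub_le (z (τ n r)) (z r)
      linarith
    show ‖‖z (τ n r) - z r‖ * ‖v₁ r‖‖ ≤ 2 * M * ‖v₁ r‖
    rw [Real.norm_of_nonneg (mul_nonneg (norm_nonneg _) (norm_nonneg _))]
    exact mul_le_mul_of_nonneg_right h1 (norm_nonneg _)
  have hE₂ : ∀ n, IntegrableOn (fun r => ‖z (τ n r) - z r‖ * ‖v₂ r‖) (Ioc s t) μ₂ := by
    intro n
    apply Integrable.mono' ((hint₂.norm.const_mul (2*M)).integrableOn)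
      (((hzmτ n).aestronglyMeasurable.sub hzm₂).norm.mul hint₂.1.restrict.norm)
    rw [ae_restrict_iff' measurableSet_Ioc]
    refine ae_of_all _ fun r hr => ?_
    have h1 : ‖z (τ n r) - z r‖ ≤ 2 * M := by
      have := hτM n r hr
      have := hMz r (hsub hr)
      have := norm_sub_le (z (τ n r)) (z r)
      linarith
    show ‖‖z (τ n r) - z r‖ * ‖v₂ r‖‖ ≤ 2 * M * ‖v₂ r‖
    rw [Real.norm_of_nonneg (mul_nonneg (norm_nonneg _) (norm_nonneg _))]
    exact mul_le_mul_of_nonneg_right h1 (norm_nonneg _)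
  -- Step A : discrete estimate
  have keyA : ∀ n k : ℕ, k ≤ n + 1 → ‖z (p n k)‖^2 - ‖z s‖^2 ≤
      2 * ((∫ r in Ioc s (p n k), ⟪z (τ n r), v₁ r⟫ ∂μ₁)
        - ∫ r in Ioc s (p n k), ⟪z (τ n r), v₂ r⟫ ∂μ₂) := by
    intro n k
    induction k with
    | zero =>
      intro _
      rw [hp0 n]
      simp
    | succ k ih =>
      intro hk
      have hk' : k ≤ n + 1 := Nat.le_of_succ_le hk
      have hsc : s ≤ p n k := hps n k
      have hcd : p n k ≤ p n (k+1) := hpmono n k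
      have hdt : p n (k+1) ≤ t := hpt n (k+1) hk
      have hct : p n k ≤ t := hcd.trans hdt
      have hdb : p n (k+1) < b := lt_of_le_of_lt hdt ht.2
      have hac : a ≤ p n k := hs.1.trans hsc
      -- representation of the increment
      have hrep : z (p n (k+1)) - z (p n k) =
          (∫ r in Ioc (p n k) (p n (k+1)), v₁ r ∂μ₁)
          - ∫ r in Ioc (p n k) (p n (k+1)), v₂ r ∂μ₂ := by
        have e₁ := hrep₁ (p n k) (p n (k+1)) hac hcd hdb
        have e₂ := hrep₂ (p n k) (p n (k+1)) hac hcd hdb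
        simp only [hz]
        rw [← e₁, ← e₂]
        abel
      have hstep : ‖z (p n (k+1))‖^2 - ‖z (p n k)‖^2 ≤
          2 * ((∫ r in Ioc (p n k) (p n (k+1)), ⟪z (τ n r), v₁ r⟫ ∂μ₁)
            - ∫ r in Ioc (p n k) (p n (k+1)), ⟪z (τ n r), v₂ r⟫ ∂μ₂) := by
        have h1 := sqid (z (p n (k+1))) (z (p n k))
        have h2 : ⟪z (p n (k+1)), z (p n (k+1)) - z (p n k)⟫ =
            (∫ r in Ioc (p n k) (p n (k+1)), ⟪z (p n (k+1)), v₁ r⟫ ∂μ₁)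
            - ∫ r in Ioc (p n k) (p n (k+1)), ⟪z (p n (k+1)), v₂ r⟫ ∂μ₂ := by
          rw [hrep, inner_sub_right,
            integral_inner hint₁.integrableOn (z (p n (k+1))),
            integral_inner hint₂.integrableOn (z (p n (k+1)))]
        have h3 : (∫ r in Ioc (p n k) (p n (k+1)), ⟪z (p n (k+1)), v₁ r⟫ ∂μ₁)
            = ∫ r in Ioc (p n k) (p n (k+1)), ⟪z (τ n r), v₁ r⟫ ∂μ₁ :=
          setIntegral_congr_fun measurableSet_Ioc
            (fun r hr => by rw [hτ_piece n k r hr])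
        have h4 : (∫ r in Ioc (p n k) (p n (k+1)), ⟪z (p n (k+1)), v₂ r⟫ ∂μ₂)
            = ∫ r in Ioc (p n k) (p n (k+1)), ⟪z (τ n r), v₂ r⟫ ∂μ₂ :=
          setIntegral_congr_fun measurableSet_Ioc
            (fun r hr => by rw [hτ_piece n k r hr])
        rw [h2, h3, h4] at h1
        linarith
      have ihk := ih hk'
      have hsubu₁ : Ioc s (p n k) ⊆ Ioc s t := Ioc_subset_Ioc_right hct
      have hsubu₂ : Ioc (p n k) (p n (k+1)) ⊆ Ioc s t := Ioc_subset_Ioc hsc hdt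
      have hu₁ : (∫ r in Ioc s (p n k), ⟪z (τ n r), v₁ r⟫ ∂μ₁)
          + (∫ r in Ioc (p n k) (p n (k+1)), ⟪z (τ n r), v₁ r⟫ ∂μ₁)
          = ∫ r in Ioc s (p n (k+1)), ⟪z (τ n r), v₁ r⟫ ∂μ₁ := by
        rw [← setIntegral_union (Ioc_disjoint_Ioc_of_le le_rfl) measurableSet_Ioc
          ((hI₁ n).mono_set hsubu₁) ((hI₁ n).mono_set hsubu₂),
          Ioc_union_Ioc_eq_Ioc hsc hcd]
      have hu₂ : (∫ r in Ioc s (p n k), ⟪z (τ n r), v₂ r⟫ ∂μ₂)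
          + (∫ r in Ioc (p n k) (p n (k+1)), ⟪z (τ n r), v₂ r⟫ ∂μ₂)
          = ∫ r in Ioc s (p n (k+1)), ⟪z (τ n r), v₂ r⟫ ∂μ₂ := by
        rw [← setIntegral_union (Ioc_disjoint_Ioc_of_le le_rfl) measurableSet_Ioc
          ((hI₂ n).mono_set hsubu₁) ((hI₂ n).mono_set hsubu₂),
          Ioc_union_Ioc_eq_Ioc hsc hcd]
      linarith
  -- Step B : replace by error integrals
  have hB₁ : ∀ n, (∫ r in Ioc s t, ⟪z (τ n r), v₁ r⟫ ∂μ₁)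
      ≤ ∫ r in Ioc s t, ‖z (τ n r) - z r‖ * ‖v₁ r‖ ∂μ₁ := by
    intro n
    apply setIntegral_mono_on_ae (hI₁ n) (hE₁ n) measurableSet_Ioc
    filter_upwards [hnc₁'] with r h hr
    have h0 := h (hsub' hr)
    have h5 : ⟪z (τ n r) - z r, v₁ r⟫ = ⟪z (τ n r), v₁ r⟫ - ⟪z r, v₁ r⟫ :=
      inner_sub_left _ _ _
    have h6 := real_inner_le_norm (z (τ n r) - z r) (v₁ r)
    linarith
  have hB₂ : ∀ n, -(∫ r in Ioc s t, ⟪z (τ n r), v₂ r⟫ ∂μ₂)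
      ≤ ∫ r in Ioc s t, ‖z (τ n r) - z r‖ * ‖v₂ r‖ ∂μ₂ := by
    intro n
    rw [← integral_neg]
    apply setIntegral_mono_on_ae (hI₂ n).neg (hE₂ n) measurableSet_Ioc
    filter_upwards [hnc₂'] with r h hr
    have h0 := h (hsub' hr)
    have h5 : ⟪z (τ n r) - z r, v₂ r⟫ = ⟪z (τ n r), v₂ r⟫ - ⟪z r, v₂ r⟫ :=
      inner_sub_left _ _ _
    have h6 := abs_real_inner_le_norm (z (τ n r) - z r) (v₂ r)
    have h7 := abs_le.mp h6
    simp only [Pi.neg_apply]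
    linarith [h7.1]
  -- Step C : error integrals tend to 0
  have hτtend : ∀ r ∈ Ioc s t, Tendsto (fun n => τ n r) atTop (𝓝[Ici r] r) := by
    intro r hr
    have hdiv : Tendsto (fun n : ℕ => (t - s)/((n:ℝ)+1)) atTop (𝓝 0) := by
      have := tendsto_one_div_add_atTop_nhds_zero_nat (𝕜 := ℝ)
      have h2 := this.const_mul (t - s)
      simpa only [mul_one_div, mul_zero] using h2
    rw [tendsto_nhdsWithin_iff]
    constructor
    · apply tendsto_of_tendsto_of_tendsto_of_le_of_le' tendsto_const_nhds
        (by simpa using tendsto_const_nhds.add hdiv)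
      · exact Eventually.of_forall fun n => (hτ_bounds n r hr).1
      · exact Eventually.of_forall fun n => (hτ_bounds n r hr).2.1
    · exact Eventually.of_forall fun n => (hτ_bounds n r hr).1
  have hC : ∀ (μ : Measure ℝ) (v : ℝ → H), Integrable v μ →
      AEStronglyMeasurable z (μ.restrict (Ioc s t)) →
      (∀ n, IntegrableOn (fun r => ‖z (τ n r) - z r‖ * ‖v r‖) (Ioc s t) μ) →
      Tendsto (fun n => ∫ r in Ioc s t, ‖z (τ n r) - z r‖ * ‖v r‖ ∂μ) atTop (𝓝 0) := by
    intro μ v hint hzm hEn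
    have h0 : (0:ℝ) = ∫ r in Ioc s t, (0:ℝ) ∂μ := by simp
    rw [h0]
    apply tendsto_integral_of_dominated_convergence (fun r => (2*M) * ‖v r‖)
      (fun n => (hEn n).1) ((hint.norm.const_mul (2*M)).integrableOn)
    · intro n
      rw [ae_restrict_iff' measurableSet_Ioc]
      refine ae_of_all _ fun r hr => ?_
      have h1 : ‖z (τ n r) - z r‖ ≤ 2 * M := by
        have := hτM n r hr
        have := hMz r (hsub hr)
        have := norm_sub_le (z (τ n r)) (z r)
        linarith
      show ‖‖z (τ n r) - z r‖ * ‖v r‖‖ ≤ 2 * M * ‖v r‖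
      rw [Real.norm_of_nonneg (mul_nonneg (norm_nonneg _) (norm_nonneg _))]
      exact mul_le_mul_of_nonneg_right h1 (norm_nonneg _)
    · rw [ae_restrict_iff' measurableSet_Ioc]
      refine ae_of_all _ fun r hr => ?_
      have h1 : Tendsto (fun n => z (τ n r)) atTop (𝓝 (z r)) :=
        (hzc r (hsub hr)).tendsto.comp (hτtend r hr)
      have h2 : Tendsto (fun n => ‖z (τ n r) - z r‖ * ‖v r‖) atTop
          (𝓝 (‖z r - z r‖ * ‖v r‖)) :=
        (((h1.sub tendsto_const_nhds).norm).mul_const _)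
      simpa using h2
  have hC₁ := hC μ₁ v₁ hint₁ hzm₁ hE₁
  have hC₂ := hC μ₂ v₂ hint₂ hzm₂ hE₂
  -- conclusion
  have hfinal : ∀ n, ‖z t‖^2 - ‖z s‖^2 ≤
      2 * (∫ r in Ioc s t, ‖z (τ n r) - z r‖ * ‖v₁ r‖ ∂μ₁)
      + 2 * (∫ r in Ioc s t, ‖z (τ n r) - z r‖ * ‖v₂ r‖ ∂μ₂) := by
    intro n
    have h1 := keyA n (n+1) le_rfl
    rw [hplast n] at h1
    have h2 := hB₁ n
    have h3 := hB₂ n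
    linarith
  have hlim : Tendsto (fun n =>
      2 * (∫ r in Ioc s t, ‖z (τ n r) - z r‖ * ‖v₁ r‖ ∂μ₁)
      + 2 * (∫ r in Ioc s t, ‖z (τ n r) - z r‖ * ‖v₂ r‖ ∂μ₂)) atTop (𝓝 0) := by
    have h00 := (hC₁.const_mul (2:ℝ)).add (hC₂.const_mul (2:ℝ))
    rw [show (2:ℝ)*0 + 2*0 = 0 by norm_num] at h00
    exact h00
  have hres : ‖z t‖^2 - ‖z s‖^2 ≤ 0 := ge_of_tendsto' hlim (fun n => hfinal n)
  simp only [hz] at hres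
  linarith
end
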